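/- arXiv:2003.07357 — 10 statements merged into one kernel-verified Lean document; each statement's English description precedes it below -/
import Mathlib

section
/- Under the time-varying stochastic approximation setting described in the context, and assuming in addition that ‖θ̂_k − θ*_k‖ is integrable for every k, the mean-absolute-deviation satisfies, for every k ∈ ℕ, E‖θ̂_{k+1} − θ*_{k+1}‖ ≤ √(u_k) · E‖θ̂_k − θ*_k‖ + M_k·√(v_k) + B_k. -/
open MeasureTheory

open MeasureTheory Real Set

section calcaux

variable {F : Type*} [NormedAddCommGroup F] [InnerProductSpace ℝ F] [CompleteSpace F]

local notation "⟪" x ", " y "⟫" => @inner ℝ _ _ x y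

lemma aux_mono01 {ψ D : ℝ → ℝ} (hψ : ∀ t, HasDerivAt ψ (D t) t)
    (hD : ∀ t ∈ Set.Icc (0:ℝ) 1, 0 ≤ D t) : ψ 0 ≤ ψ 1 := by
  have hmono := monotoneOn_of_deriv_nonneg (convex_Icc (0:ℝ) 1)
    (fun t _ => (hψ t).continuousAt.continuousWithinAt)
    (fun t ht => ((hψ t).differentiableAt).differentiableWithinAt)
    (fun t ht => by
      rw [(hψ t).deriv]
      exact hD t (interior_subset ht))
  exact hmono (Set.left_mem_Icc.2 zero_le_one) (Set.right_mem_Icc.2 zero_le_one) zero_le_one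

lemma hasDerivAt_line {f : F → ℝ} {g : F → F} (hg : ∀ z, HasGradientAt f (g z) z)
    (x u : F) (t : ℝ) :
    HasDerivAt (fun s : ℝ => f (x + s • u)) ⟪g (x + t • u), u⟫ t := by
  have h1 : HasDerivAt (fun s : ℝ => x + s • u) u t := by
    simpa using ((hasDerivAt_id t).smul_const u).const_add x
  have h3 := (hg (x + t • u)).hasFDerivAt.comp_hasDerivAt t h1
  simpa [InnerProductSpace.toDual_apply_apply, Function.comp_def] using h3

lemma grad_lower {f : F → ℝ} {g : F → F} (hg : ∀ z, HasGradientAt f (g z) z)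
    (hmono : ∀ z w : F, 0 ≤ ⟪z - w, g z - g w⟫) (x y : F) :
    f x + ⟪g x, y - x⟫ ≤ f y := by
  set u := y - x with hu
  have key := aux_mono01 (ψ := fun t : ℝ => f (x + t • u) - t * ⟪g x, u⟫)
    (D := fun t => ⟪g (x + t • u), u⟫ - ⟪g x, u⟫)
    (fun t => (hasDerivAt_line hg x u t).sub
      (by simpa using (hasDerivAt_id t).mul_const ⟪g x, u⟫))
    (fun t ht => by
      have h := hmono (x + t • u) x
      rw [add_sub_cancel_left] at h
      rw [real_inner_smul_left] at h
      rcases eq_or_lt_of_le ht.1 with h0 | h0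
      · simp [← h0]
      · have h2 := (mul_nonneg_iff_of_pos_left h0).mp h
        rw [sub_nonneg, ← sub_nonneg (b := ⟪g x, u⟫), ← inner_sub_left]
        rwa [real_inner_comm])
  simp only [zero_smul, add_zero, zero_mul, sub_zero, one_smul, one_mul] at key
  have hxy : x + u = y := by rw [hu]; abel
  rw [hxy] at key
  linarith

lemma grad_descent {f : F → ℝ} {g : F → F} {L : ℝ} (hg : ∀ z, HasGradientAt f (g z) z)
    (hlip : ∀ z w : F, ‖g z - g w‖ ≤ L * ‖z - w‖) (x y : F) :
    f y ≤ f x + ⟪g x, y - x⟫ + L / 2 * ‖y - x‖ ^ 2 := by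
  set u := y - x with hu
  have key := aux_mono01
    (ψ := fun t : ℝ => t * ⟪g x, u⟫ + L * t ^ 2 / 2 * ‖u‖ ^ 2 - f (x + t • u))
    (D := fun t => ⟪g x, u⟫ + L * t * ‖u‖ ^ 2 - ⟪g (x + t • u), u⟫)
    (fun t => by
      have h1 : HasDerivAt (fun t : ℝ => t * ⟪g x, u⟫ + L * t ^ 2 / 2 * ‖u‖ ^ 2)
          (⟪g x, u⟫ + L * t * ‖u‖ ^ 2) t := by
        have ha := (hasDerivAt_id t).mul_const ⟪g x, u⟫
        have hb := (((hasDerivAt_pow 2 t).const_mul L).div_const 2).mul_const (‖u‖ ^ 2)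
        exact (ha.add hb).congr_deriv (by rw [show (2:ℕ) - 1 = 1 from rfl]; ring)
      exact h1.sub (hasDerivAt_line hg x u t))
    (fun t ht => by
      have h := hlip (x + t • u) x
      rw [add_sub_cancel_left, norm_smul] at h
      have h2 : ⟪g (x + t • u) - g x, u⟫ ≤ L * (|t| * ‖u‖) * ‖u‖ :=
        le_trans (real_inner_le_norm _ _) (by
          have := mul_le_mul_of_nonneg_right h (norm_nonneg u)
          simpa using this)
      rw [sub_nonneg]
      have habs : |t| = t := abs_of_nonneg ht.1
      rw [habs] at h2
      rw [inner_sub_left] at h2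
      nlinarith [h2])
  simp only [zero_smul, add_zero, zero_mul, zero_pow, mul_zero, zero_div, sub_zero,
    one_smul, one_mul, one_pow, zero_add] at key
  have hxy : x + u = y := by rw [hu]; abel
  rw [hxy] at key
  linarith

lemma grad_cocoercive {f : F → ℝ} {g : F → F} {L : ℝ} (hL : 0 < L)
    (hg : ∀ z, HasGradientAt f (g z) z)
    (hmono : ∀ z w : F, 0 ≤ ⟪z - w, g z - g w⟫)
    (hlip : ∀ z w : F, ‖g z - g w‖ ≤ L * ‖z - w‖) (x y : F) :
    ‖g x - g y‖ ^ 2 ≤ L * ⟪x - y, g x - g y⟫ := by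
  have main : ∀ x y : F, f x - f y ≤ ⟪g x, x - y⟫ - L⁻¹ / 2 * ‖g x - g y‖ ^ 2 := by
    intro x y
    set z := y - L⁻¹ • (g y - g x) with hz
    have h1 := grad_lower hg hmono x z
    have h2 := grad_descent hg hlip y z
    have e1 : z - y = -(L⁻¹ • (g y - g x)) := by rw [hz]; abel
    have e2 : z - x = (y - x) - L⁻¹ • (g y - g x) := by rw [hz]; abel
    rw [e1] at h2
    rw [e2] at h1
    rw [inner_sub_right, real_inner_smul_right] at h1
    rw [inner_neg_right, real_inner_smul_right] at h2
    rw [norm_neg, norm_smul, mul_pow] at h2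
    have hgyx : ⟪g y, g y - g x⟫ - ⟪g x, g y - g x⟫ = ‖g y - g x‖ ^ 2 := by
      rw [← inner_sub_left, real_inner_self_eq_norm_sq]
    have hnorm : ‖g x - g y‖ = ‖g y - g x‖ := by rw [← neg_sub, norm_neg]
    have hLinv : ‖(L:ℝ)⁻¹‖ = L⁻¹ := by
      rw [Real.norm_eq_abs, abs_of_nonneg (inv_nonneg.mpr hL.le)]
    rw [hLinv] at h2
    have hinner : ⟪g x, y - x⟫ = -⟪g x, x - y⟫ := by
      rw [← inner_neg_right, neg_sub]
    have hcomp : L / 2 * ((L⁻¹) ^ 2 * ‖g y - g x‖ ^ 2) = L⁻¹ / 2 * ‖g y - g x‖ ^ 2 := by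
      field_simp
    have hmul : L⁻¹ * ⟪g y, g y - g x⟫ - L⁻¹ * ⟪g x, g y - g x⟫
        = L⁻¹ * ‖g y - g x‖ ^ 2 := by rw [← mul_sub, hgyx]
    rw [hnorm]
    linarith
  have hxy := main x y
  have hyx := main y x
  have hnorm2 : ‖g y - g x‖ = ‖g x - g y‖ := by rw [← neg_sub, norm_neg]
  rw [hnorm2] at hyx
  have hexpand : ⟪g y, y - x⟫ + ⟪g x, x - y⟫ = ⟪x - y, g x - g y⟫ := by
    simp only [inner_sub_left, inner_sub_right]
    rw [real_inner_comm x (g x), real_inner_comm y (g y), real_inner_comm x (g y),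
      real_inner_comm y (g x)]
    ring
  have hsum : L⁻¹ * ‖g x - g y‖ ^ 2 ≤ ⟪x - y, g x - g y⟫ := by linarith
  have hfin := mul_le_mul_of_nonneg_left hsum hL.le
  rwa [← mul_assoc, mul_inv_cancel₀ hL.ne', one_mul] at hfin


lemma step_bound {d G : F} {aa Ck Lk qk uk : ℝ} (hC : 0 < Ck) (haa : 0 < aa)
    (hqk : 0 < qk) (haL : 1 ≤ aa * Lk) (haLq : (qk + 1) * (aa * Lk - 1) ≤ 1)
    (hCL : Ck ≤ Lk)
    (hsc : Ck * ‖d‖ ^ 2 ≤ ⟪d, G⟫) (hco : ‖G‖ ^ 2 ≤ Lk * ⟪d, G⟫)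
    (huk : uk = Lk / Ck + aa * Ck * ((qk + 1) * (aa * Lk - 1) - 1)) :
    ‖d - aa • G‖ ≤ Real.sqrt uk * ‖d‖ := by
  have hip : 0 ≤ ⟪d, G⟫ := le_trans (by positivity) hsc
  have haL2 : aa * Lk < 2 := by nlinarith
  have hLC1 : 1 ≤ Lk / Ck := (one_le_div hC).2 hCL
  have hrho : uk = (1 + aa * Ck * (aa * Lk - 2)) + (Lk / Ck - 1) + aa * Ck * qk * (aa * Lk - 1) := by
    rw [huk]; ring
  have hrho0 : 0 ≤ 1 + aa * Ck * (aa * Lk - 2) := by nlinarith [sq_nonneg (1 - aa * Lk)]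
  have huk0 : 0 ≤ uk := by
    rw [hrho]
    have h1 : 0 ≤ aa * Ck * qk * (aa * Lk - 1) := by
      have : 0 ≤ aa * Lk - 1 := by linarith
      positivity
    linarith
  have hexp : ‖d - aa • G‖ ^ 2 = ‖d‖ ^ 2 - 2 * (aa * ⟪d, G⟫) + aa ^ 2 * ‖G‖ ^ 2 := by
    rw [norm_sub_sq_real, real_inner_smul_right, norm_smul, mul_pow,
      Real.norm_eq_abs, sq_abs]
  have hsq : ‖d - aa • G‖ ^ 2 ≤ uk * ‖d‖ ^ 2 := by
    rw [hexp, hrho]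
    have hGsq : aa ^ 2 * ‖G‖ ^ 2 ≤ aa ^ 2 * (Lk * ⟪d, G⟫) :=
      mul_le_mul_of_nonneg_left hco (sq_nonneg aa)
    have hstep : aa * (2 - aa * Lk) * (Ck * ‖d‖ ^ 2) ≤ aa * (2 - aa * Lk) * ⟪d, G⟫ :=
      mul_le_mul_of_nonneg_left hsc (by nlinarith)
    have h1 : 0 ≤ (Lk / Ck - 1) * ‖d‖ ^ 2 := by
      have := sq_nonneg ‖d‖; nlinarith
    have h2 : 0 ≤ aa * Ck * qk * (aa * Lk - 1) * ‖d‖ ^ 2 := by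
      have h3 : 0 ≤ aa * Lk - 1 := by linarith
      positivity
    nlinarith
  have hle := Real.sqrt_le_sqrt hsq
  rwa [Real.sqrt_sq (norm_nonneg _), Real.sqrt_mul huk0, Real.sqrt_sq (norm_nonneg d)] at hle

end calcaux

section intaux

open MeasureTheory

lemma mean_le_of_sq {Ω : Type} [MeasurableSpace Ω] {P : Measure Ω} [IsProbabilityMeasure P]
    {h : Ω → ℝ} (hh : ∀ ω, 0 ≤ h ω) (hint1 : Integrable h P)
    (hint2 : Integrable (fun ω => h ω ^ 2) P) {Mk : ℝ} (hMk : 0 ≤ Mk)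
    (hbound : (∫ ω, h ω ^ 2 ∂P) ≤ Mk ^ 2) : (∫ ω, h ω ∂P) ≤ Mk := by
  set m := ∫ ω, h ω ∂P with hm
  have hm0 : 0 ≤ m := integral_nonneg hh
  have hvar : 0 ≤ ∫ ω, (h ω - m) ^ 2 ∂P := integral_nonneg fun ω => sq_nonneg _
  have hexp : (∫ ω, (h ω - m) ^ 2 ∂P)
      = (∫ ω, h ω ^ 2 ∂P) - 2 * m * m + m ^ 2 := by
    have hrw : (fun ω => (h ω - m) ^ 2)
        = fun ω => h ω ^ 2 - (2 * m) * h ω + m ^ 2 := funext fun ω => by ring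
    have i1 : Integrable (fun ω => h ω ^ 2 - 2 * m * h ω) P :=
      hint2.sub (hint1.const_mul (2 * m))
    rw [hrw, integral_add i1 (integrable_const _),
      integral_sub hint2 (hint1.const_mul (2 * m)), integral_const_mul, integral_const]
    simp [hm]
  nlinarith
end intaux

/-- MAD bound under the bounded-drift time-varying stochastic approximation setting:
for every `k`,
`E‖θ̂_{k+1} − θ*_{k+1}‖ ≤ √(u_k)·E‖θ̂_k − θ*_k‖ + M_k·√(v_k) + B_k`. -/
theorem stmt_0 {p : ℕ} (hp : 1 ≤ p)
    {Ω : Type} [MeasurableSpace Ω] (P : Measure Ω) [IsProbabilityMeasure P]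
    (θhat θstar e : ℕ → Ω → EuclideanSpace ℝ (Fin p))
    (f : ℕ → Ω → EuclideanSpace ℝ (Fin p) → ℝ)
    (g : ℕ → Ω → EuclideanSpace ℝ (Fin p) → EuclideanSpace ℝ (Fin p))
    (a q C L M B u v : ℕ → ℝ)
    (hmeas1 : ∀ k, Measurable (θhat k))
    (hmeas2 : ∀ k, Measurable (θstar k))
    (hmeas3 : ∀ k, Measurable (e k))
    (hCpos : ∀ k, 0 < C k) (hM : ∀ k, 0 ≤ M k) (hB : ∀ k, 0 ≤ B k)
    (hreg : ∀ k, ∀ᵐ ω ∂P,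
      ContDiff ℝ 1 (f k ω) ∧
      (∀ x, HasGradientAt (f k ω) (g k ω x) x) ∧
      (∀ x y : EuclideanSpace ℝ (Fin p),
        C k * ‖x - y‖ ^ 2 ≤ (inner ℝ (x - y) (g k ω x - g k ω y) : ℝ)) ∧
      (∀ x y : EuclideanSpace ℝ (Fin p), ‖g k ω x - g k ω y‖ ≤ L k * ‖x - y‖) ∧
      g k ω (θstar k ω) = 0)
    (hrec : ∀ k, ∀ᵐ ω ∂P,
      θhat (k + 1) ω = θhat k ω - a k • (g k ω (θhat k ω) + e k ω))
    (heL2 : ∀ k, MemLp (e k) 2 P)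
    (heM : ∀ k, (∫ ω, ‖e k ω‖ ^ 2 ∂P) ≤ M k ^ 2)
    (hdL2 : ∀ k, MemLp (fun ω => θstar (k + 1) ω - θstar k ω) 2 P)
    (hdB : ∀ k, (∫ ω, ‖θstar (k + 1) ω - θstar k ω‖ ^ 2 ∂P) ≤ B k ^ 2)
    (ha : ∀ k, 0 < a k) (hq : ∀ k, 0 < q k)
    (haL : ∀ k, 1 ≤ a k * L k)
    (haLq : ∀ k, (q k + 1) * (a k * L k - 1) ≤ 1)
    (hu : ∀ k, u k = L k / C k + a k * C k * ((q k + 1) * (a k * L k - 1) - 1))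
    (hv : ∀ k, v k = a k * (a k * L k * (q k + 1) - 1) / (q k * C k))
    (hint : ∀ k, Integrable (fun ω => ‖θhat k ω - θstar k ω‖) P) :
    ∀ k, (∫ ω, ‖θhat (k + 1) ω - θstar (k + 1) ω‖ ∂P) ≤
      Real.sqrt (u k) * (∫ ω, ‖θhat k ω - θstar k ω‖ ∂P) +
        M k * Real.sqrt (v k) + B k := by
  intro k
  have hLpos : 0 < L k := by nlinarith [haL k, ha k]
  -- C k ≤ L k
  have hCL : C k ≤ L k := by
    haveI : (MeasureTheory.ae P).NeBot :=
      MeasureTheory.ae_neBot.2 (IsProbabilityMeasure.ne_zero P)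
    obtain ⟨ω, -, -, hsc, hlip, -⟩ := (hreg k).exists
    set w : EuclideanSpace ℝ (Fin p) := EuclideanSpace.single ⟨0, hp⟩ (1:ℝ) with hw
    have hwn : ‖w‖ = 1 := by simp [hw]
    have h1 := hsc w 0
    have h2 := hlip w 0
    have h3 := real_inner_le_norm (w - 0) (g k ω w - g k ω 0)
    rw [sub_zero] at h1 h2 h3
    rw [hwn] at h1 h2 h3
    have := le_trans h1 (le_trans h3 (by simpa using h2))
    simpa using this
  -- pointwise a.e. bound
  have hptwise : ∀ᵐ ω ∂P, ‖θhat (k + 1) ω - θstar (k + 1) ω‖ ≤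
      Real.sqrt (u k) * ‖θhat k ω - θstar k ω‖ + a k * ‖e k ω‖ +
        ‖θstar (k + 1) ω - θstar k ω‖ := by
    filter_upwards [hreg k, hrec k] with ω hre hrc
    obtain ⟨-, hgrad, hsc, hlip, hzero⟩ := hre
    have hmono : ∀ z w : EuclideanSpace ℝ (Fin p),
        0 ≤ (inner ℝ (z - w) (g k ω z - g k ω w) : ℝ) :=
      fun z w => le_trans (mul_nonneg (hCpos k).le (sq_nonneg _)) (hsc z w)
    have hco := grad_cocoercive hLpos hgrad hmono hlip (θhat k ω) (θstar k ω)
    have hsck := hsc (θhat k ω) (θstar k ω)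
    rw [hzero, sub_zero] at hco hsck
    have hkey := step_bound (hCpos k) (ha k) (hq k) (haL k) (haLq k) hCL hsck hco (hu k)
    have hid : θhat (k + 1) ω - θstar (k + 1) ω =
        (θhat k ω - θstar k ω - a k • g k ω (θhat k ω)) - a k • e k ω -
          (θstar (k + 1) ω - θstar k ω) := by
      rw [hrc, smul_add]; abel
    rw [hid]
    have ht : ‖(θhat k ω - θstar k ω - a k • g k ω (θhat k ω)) - a k • e k ω -
          (θstar (k + 1) ω - θstar k ω)‖ ≤
        ‖θhat k ω - θstar k ω - a k • g k ω (θhat k ω)‖ + ‖a k • e k ω‖ +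
          ‖θstar (k + 1) ω - θstar k ω‖ := by
      refine le_trans (norm_sub_le _ _) ?_
      exact add_le_add_left (norm_sub_le _ _) _
    refine le_trans ht ?_
    have hne : ‖a k • e k ω‖ = a k * ‖e k ω‖ := by
      rw [norm_smul, Real.norm_eq_abs, abs_of_nonneg (ha k).le]
    rw [hne]
    exact add_le_add_left (add_le_add_left hkey _) _
  -- integrability
  have hInt_e : Integrable (fun ω => ‖e k ω‖) P := ((heL2 k).integrable one_le_two).norm
  have hInt_dr : Integrable (fun ω => ‖θstar (k + 1) ω - θstar k ω‖) P :=
    ((hdL2 k).integrable one_le_two).norm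
  have hInt_es : Integrable (fun ω => ‖e k ω‖ ^ 2) P := ((heL2 k).norm).integrable_sq
  have hInt_ds : Integrable (fun ω => ‖θstar (k + 1) ω - θstar k ω‖ ^ 2) P :=
    ((hdL2 k).norm).integrable_sq
  have hInt_maj : Integrable (fun ω => Real.sqrt (u k) * ‖θhat k ω - θstar k ω‖ +
      a k * ‖e k ω‖ + ‖θstar (k + 1) ω - θstar k ω‖) P :=
    (((hint k).const_mul _).add (hInt_e.const_mul _)).add hInt_dr
  have hmono_int := integral_mono_of_nonneg
    (Filter.Eventually.of_forall fun ω => norm_nonneg _) hInt_maj hptwise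
  refine le_trans hmono_int ?_
  have i1 : Integrable (fun ω => Real.sqrt (u k) * ‖θhat k ω - θstar k ω‖ +
      a k * ‖e k ω‖) P := ((hint k).const_mul _).add (hInt_e.const_mul _)
  rw [integral_add i1 hInt_dr,
    integral_add ((hint k).const_mul _) (hInt_e.const_mul _),
    integral_const_mul, integral_const_mul]
  have hEe : (∫ ω, ‖e k ω‖ ∂P) ≤ M k :=
    mean_le_of_sq (fun ω => norm_nonneg _) hInt_e hInt_es (hM k) (heM k)
  have hEd : (∫ ω, ‖θstar (k + 1) ω - θstar k ω‖ ∂P) ≤ B k :=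
    mean_le_of_sq (fun ω => norm_nonneg _) hInt_dr hInt_ds (hB k) (hdB k)
  have hv0 : 0 ≤ v k := by
    rw [hv k]
    apply div_nonneg _ (mul_nonneg (hq k).le (hCpos k).le)
    apply mul_nonneg (ha k).le
    nlinarith [haL k, hq k, mul_nonneg (mul_nonneg (ha k).le hLpos.le) (hq k).le]
  have hav : a k ≤ Real.sqrt (v k) := by
    rw [Real.le_sqrt (ha k).le hv0]
    rw [hv k, le_div_iff₀ (mul_pos (hq k) (hCpos k))]
    nlinarith [mul_le_mul_of_nonneg_left hCL (mul_nonneg (ha k).le (hq k).le),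
      haL k, ha k, hq k, hCpos k]
  have hEe0 : 0 ≤ ∫ ω, ‖e k ω‖ ∂P := integral_nonneg fun ω => norm_nonneg _
  have h2 : a k * ∫ ω, ‖e k ω‖ ∂P ≤ M k * Real.sqrt (v k) := by
    calc a k * ∫ ω, ‖e k ω‖ ∂P ≤ a k * M k :=
          mul_le_mul_of_nonneg_left hEe (ha k).le
      _ ≤ Real.sqrt (v k) * M k := mul_le_mul_of_nonneg_right hav (hM k)
      _ = M k * Real.sqrt (v k) := mul_comm _ _
  have h1 : Real.sqrt (u k) * ∫ ω, ‖θhat k ω - θstar k ω‖ ∂P ≤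
      Real.sqrt (u k) * ∫ ω, ‖θhat k ω - θstar k ω‖ ∂P := le_rfl
  linarith
end

section
/- Under the time-varying stochastic approximation setting described in the context, assume in addition that ‖θ̂_k − θ*_k‖ is integrable for every k, that there is ū with u_k ≤ ū < 1 for all k, and that there are constants 0 < x̲ ≤ X < ∞ with x̲ ≤ (M_k√(v_k) + B_k)/(1 − √(u_k)) ≤ X for all k. Then limsup_{k→∞} E‖θ̂_k − θ*_k‖ ≤ limsup_{k→∞} (M_k√(v_k) + B_k)/(1 − √(u_k)). -/
open MeasureTheory


section trackingAux

variable {E : Type*} [NormedAddCommGroup E] [InnerProductSpace ℝ E] [CompleteSpace E]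

local notation "⟪" x ", " y "⟫" => @inner ℝ _ _ x y

private lemma tracking_comp_line_hasDerivAt (f : E → ℝ) (g : E → E)
    (hg : ∀ z, HasGradientAt f (g z) z) (x δ : E) (t : ℝ) :
    HasDerivAt (fun t : ℝ => f (x + t • δ)) ⟪g (x + t • δ), δ⟫ t := by
  have hline : HasDerivAt (fun s : ℝ => x + s • δ) δ t := by
    simpa using ((hasDerivAt_id t).smul_const δ).const_add x
  have := ((hg (x + t • δ)).hasFDerivAt).comp_hasDerivAt t hline
  simpa [InnerProductSpace.toDual_apply_apply, Function.comp_def] using this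

private lemma tracking_lower_bound (f : E → ℝ) (g : E → E) (C : ℝ)
    (hg : ∀ z, HasGradientAt f (g z) z)
    (hmono : ∀ x y : E, C * ‖x - y‖ ^ 2 ≤ ⟪x - y, g x - g y⟫) (x δ : E) :
    f x + ⟪g x, δ⟫ + C / 2 * ‖δ‖ ^ 2 ≤ f (x + δ) := by
  set F : ℝ → ℝ := fun t => f (x + t • δ) - t * ⟪g x, δ⟫ - C / 2 * t ^ 2 * ‖δ‖ ^ 2 with hF
  have hd : ∀ t : ℝ, HasDerivAt F
      (⟪g (x + t • δ), δ⟫ - ⟪g x, δ⟫ - C / 2 * (2 * t) * ‖δ‖ ^ 2) t := by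
    intro t
    have h := ((tracking_comp_line_hasDerivAt f g hg x δ t).sub
      ((hasDerivAt_id t).mul_const ⟪g x, δ⟫)).sub
      (((hasDerivAt_pow 2 t).const_mul (C / 2)).mul_const (‖δ‖ ^ 2))
    exact h.congr_deriv (by push_cast; ring)
  have hmonoF : MonotoneOn F (Set.Icc (0:ℝ) 1) := by
    apply monotoneOn_of_deriv_nonneg (convex_Icc 0 1)
    · exact fun t _ => ((hd t).continuousAt).continuousWithinAt
    · exact fun t _ => ((hd t).differentiableAt).differentiableWithinAt
    · intro t ht
      rw [interior_Icc] at ht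
      rw [(hd t).deriv]
      have h1 := hmono (x + t • δ) x
      have h2 : x + t • δ - x = t • δ := by abel
      rw [h2] at h1
      have h3 : ⟪t • δ, g (x + t • δ) - g x⟫ = t * (⟪g (x + t • δ), δ⟫ - ⟪g x, δ⟫) := by
        rw [real_inner_smul_left, inner_sub_right]
        rw [real_inner_comm δ (g (x + t • δ)), real_inner_comm δ (g x)]
      have h4 : ‖t • δ‖ ^ 2 = t ^ 2 * ‖δ‖ ^ 2 := by
        rw [norm_smul, mul_pow, Real.norm_eq_abs, sq_abs]
      rw [h3, h4] at h1
      have ht0 : 0 < t := ht.1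
      nlinarith [h1]
  have := hmonoF (Set.mem_Icc.mpr ⟨le_refl 0, zero_le_one⟩)
    (Set.mem_Icc.mpr ⟨zero_le_one, le_refl 1⟩) zero_le_one
  simp only [hF, zero_smul, add_zero, one_smul, zero_pow, one_pow] at this
  nlinarith [this]

private lemma tracking_descent (f : E → ℝ) (g : E → E) (L : ℝ)
    (hg : ∀ z, HasGradientAt f (g z) z)
    (hlip : ∀ x y : E, ‖g x - g y‖ ≤ L * ‖x - y‖) (x δ : E) :
    f (x + δ) ≤ f x + ⟪g x, δ⟫ + L / 2 * ‖δ‖ ^ 2 := by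
  set F : ℝ → ℝ := fun t => t * ⟪g x, δ⟫ + L / 2 * t ^ 2 * ‖δ‖ ^ 2 - f (x + t • δ) with hF
  have hd : ∀ t : ℝ, HasDerivAt F
      (⟪g x, δ⟫ + L / 2 * (2 * t) * ‖δ‖ ^ 2 - ⟪g (x + t • δ), δ⟫) t := by
    intro t
    have h := (((hasDerivAt_id t).mul_const ⟪g x, δ⟫).add
      (((hasDerivAt_pow 2 t).const_mul (L / 2)).mul_const (‖δ‖ ^ 2))).sub
      (tracking_comp_line_hasDerivAt f g hg x δ t)
    exact h.congr_deriv (by push_cast; ring)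
  have hmonoF : MonotoneOn F (Set.Icc (0:ℝ) 1) := by
    apply monotoneOn_of_deriv_nonneg (convex_Icc 0 1)
    · exact fun t _ => ((hd t).continuousAt).continuousWithinAt
    · exact fun t _ => ((hd t).differentiableAt).differentiableWithinAt
    · intro t ht
      rw [interior_Icc] at ht
      rw [(hd t).deriv]
      have h1 := hlip (x + t • δ) x
      have h2 : x + t • δ - x = t • δ := by abel
      rw [h2] at h1
      have h3 : ⟪g (x + t • δ), δ⟫ - ⟪g x, δ⟫ ≤ ‖g (x + t • δ) - g x‖ * ‖δ‖ := by
        calc ⟪g (x + t • δ), δ⟫ - ⟪g x, δ⟫ = ⟪g (x + t • δ) - g x, δ⟫ := by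
              rw [inner_sub_left]
          _ ≤ ‖g (x + t • δ) - g x‖ * ‖δ‖ := real_inner_le_norm _ _
      have h4 : ‖t • δ‖ = t * ‖δ‖ := by
        rw [norm_smul, Real.norm_eq_abs, abs_of_pos ht.1]
      rw [h4] at h1
      nlinarith [h3, h1, mul_le_mul_of_nonneg_right h1 (norm_nonneg δ), norm_nonneg δ,
        norm_nonneg (g (x + t • δ) - g x)]
  have := hmonoF (Set.mem_Icc.mpr ⟨le_refl 0, zero_le_one⟩)
    (Set.mem_Icc.mpr ⟨zero_le_one, le_refl 1⟩) zero_le_one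
  simp only [hF, zero_smul, add_zero, one_smul, zero_pow, one_pow] at this
  nlinarith [this]

private lemma tracking_interp (f : E → ℝ) (g : E → E) (C L : ℝ) (hC : 0 < C) (hCL : C ≤ L)
    (hg : ∀ z, HasGradientAt f (g z) z)
    (hmono : ∀ x y : E, C * ‖x - y‖ ^ 2 ≤ ⟪x - y, g x - g y⟫)
    (hlip : ∀ x y : E, ‖g x - g y‖ ≤ L * ‖x - y‖) (x y : E) :
    ‖g x - g y‖ ^ 2 + C * L * ‖x - y‖ ^ 2 ≤ (C + L) * ⟪x - y, g x - g y⟫ := by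
  rcases eq_or_lt_of_le hCL with hEq | hLt
  · subst hEq
    have h1 := hmono x y
    have h2 := hlip x y
    have h3 : ‖g x - g y‖ ^ 2 ≤ C ^ 2 * ‖x - y‖ ^ 2 := by
      nlinarith [norm_nonneg (g x - g y), norm_nonneg (x - y)]
    nlinarith [h1]
  · have hP1 : ∀ a δ : E, f (a + δ) ≤ f a + ⟪g a, δ⟫ + L / 2 * ‖δ‖ ^ 2 :=
      tracking_descent f g L hg hlip
    have hP2 : ∀ a δ : E, f a + ⟪g a, δ⟫ + C / 2 * ‖δ‖ ^ 2 ≤ f (a + δ) :=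
      tracking_lower_bound f g C hg hmono
    set c : ℝ := (L - C)⁻¹ with hc
    have hc0 : 0 < c := inv_pos.mpr (by linarith)
    set K : E := (g x - g y) - C • (x - y) with hK
    suffices hark : ‖K‖ ^ 2 ≤ (L - C) * ⟪K, x - y⟫ by
      have e1 : ‖K‖ ^ 2 = ‖g x - g y‖ ^ 2 - 2 * C * ⟪x - y, g x - g y⟫ + C ^ 2 * ‖x - y‖ ^ 2 := by
        rw [hK, norm_sub_sq_real, norm_smul, real_inner_smul_right]
        rw [real_inner_comm (g x - g y) (x - y)]
        rw [Real.norm_eq_abs, abs_of_pos hC]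
        ring
      have e2 : ⟪K, x - y⟫ = ⟪x - y, g x - g y⟫ - C * ‖x - y‖ ^ 2 := by
        rw [hK, inner_sub_left, real_inner_smul_left, real_inner_comm (g x - g y) (x - y),
          real_inner_self_eq_norm_sq]
      rw [e1, e2] at hark
      nlinarith [hark]
    have hD1 : ∀ a δ : E, (f (a + δ) - C / 2 * ‖a + δ‖ ^ 2) ≤
        (f a - C / 2 * ‖a‖ ^ 2) + ⟪g a - C • a, δ⟫ + (L - C) / 2 * ‖δ‖ ^ 2 := by
      intro a δ
      have h := hP1 a δ
      have e3 : ‖a + δ‖ ^ 2 = ‖a‖ ^ 2 + 2 * ⟪a, δ⟫ + ‖δ‖ ^ 2 := norm_add_sq_real a δ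
      have e4 : ⟪g a - C • a, δ⟫ = ⟪g a, δ⟫ - C * ⟪a, δ⟫ := by
        rw [inner_sub_left, real_inner_smul_left]
      rw [e3, e4]; linarith
    have hD2 : ∀ a δ : E, (f a - C / 2 * ‖a‖ ^ 2) + ⟪g a - C • a, δ⟫ ≤
        (f (a + δ) - C / 2 * ‖a + δ‖ ^ 2) := by
      intro a δ
      have h := hP2 a δ
      have e3 : ‖a + δ‖ ^ 2 = ‖a‖ ^ 2 + 2 * ⟪a, δ⟫ + ‖δ‖ ^ 2 := norm_add_sq_real a δ
      have e4 : ⟪g a - C • a, δ⟫ = ⟪g a, δ⟫ - C * ⟪a, δ⟫ := by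
        rw [inner_sub_left, real_inner_smul_left]
      rw [e3, e4]; linarith
    have key : ∀ x' y' : E, (f x' - C / 2 * ‖x'‖ ^ 2) + ⟪g x' - C • x', y' - x'⟫ +
        c / 2 * ‖(g y' - C • y') - (g x' - C • x')‖ ^ 2 ≤ (f y' - C / 2 * ‖y'‖ ^ 2) := by
      intro x' y'
      set Kd : E := (g y' - C • y') - (g x' - C • x') with hKd
      set z : E := y' - c • Kd with hz
      have h1 := hD2 x' (z - x')
      have h2 := hD1 y' (z - y')
      rw [add_sub_cancel] at h1 h2
      have ez : z - y' = -(c • Kd) := by rw [hz]; abel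
      have einner : ⟪g x' - C • x', z - x'⟫
          = ⟪g x' - C • x', y' - x'⟫ - c * ⟪g x' - C • x', Kd⟫ := by
        rw [hz]
        have : y' - c • Kd - x' = (y' - x') + (-(c • Kd)) := by abel
        rw [this, inner_add_right, inner_neg_right, real_inner_smul_right]; ring
      have einner2 : ⟪g y' - C • y', z - y'⟫ = -(c * ⟪g y' - C • y', Kd⟫) := by
        rw [ez, inner_neg_right, real_inner_smul_right]
      have enorm : ‖z - y'‖ ^ 2 = c ^ 2 * ‖Kd‖ ^ 2 := by
        rw [ez, norm_neg, norm_smul, Real.norm_eq_abs, abs_of_pos hc0, mul_pow]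
      rw [einner] at h1
      rw [einner2, enorm] at h2
      have ediff : ⟪g y' - C • y', Kd⟫ - ⟪g x' - C • x', Kd⟫ = ‖Kd‖ ^ 2 := by
        rw [← inner_sub_left, ← hKd, real_inner_self_eq_norm_sq]
      have hLC0 : L - C ≠ 0 := by linarith
      have hc2 : (L - C) / 2 * (c ^ 2 * ‖Kd‖ ^ 2) = c / 2 * ‖Kd‖ ^ 2 := by
        rw [hc]; field_simp
      have ediff' : c * ⟪g y' - C • y', Kd⟫ - c * ⟪g x' - C • x', Kd⟫ = c * ‖Kd‖ ^ 2 := by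
        rw [← mul_sub, ediff]
      linarith [h1, h2, ediff', hc2]
    have k1 := key x y
    have k2 := key y x
    set gx : E := g x - C • x with hgx
    set gy : E := g y - C • y with hgy
    have eKK : gy - gx = -K := by
      rw [hK, hgx, hgy, smul_sub]; abel
    have eKK2 : gx - gy = K := by
      rw [hK, hgx, hgy, smul_sub]; abel
    rw [eKK] at k1
    rw [eKK2] at k2
    rw [norm_neg] at k1
    have esum : ⟪gx, y - x⟫ + ⟪gy, x - y⟫ = -⟪K, x - y⟫ := by
      have : ⟪gx, y - x⟫ = -⟪gx, x - y⟫ := by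
        rw [← inner_neg_right]; congr 1; abel
      rw [this, show -⟪gx, x - y⟫ + ⟪gy, x - y⟫ = -(⟪gx, x - y⟫ - ⟪gy, x - y⟫) from by ring,
        ← inner_sub_left, eKK2]
    have hcc : (L - C) * c = 1 := by
      rw [hc, mul_inv_cancel₀ (by linarith : L - C ≠ 0)]
    have hfin : c * ‖K‖ ^ 2 ≤ ⟪K, x - y⟫ := by linarith [k1, k2, esum]
    have hLC : (0:ℝ) ≤ L - C := by linarith
    calc ‖K‖ ^ 2 = (L - C) * (c * ‖K‖ ^ 2) := by rw [← mul_assoc, hcc, one_mul]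
      _ ≤ (L - C) * ⟪K, x - y⟫ := mul_le_mul_of_nonneg_left hfin hLC

private lemma tracking_sc1 (a q C L : ℝ) (ha : 0 < a) (hq : 0 < q) (hC : 0 < C) (hCL : C ≤ L)
    (haL : 1 ≤ a * L) (haLq : (q + 1) * (a * L - 1) ≤ 1) :
    C * (a * L - 1) ^ 2 ≤ L + a * C ^ 2 * ((q + 1) * (a * L - 1) - 1) := by
  have hb : a * C ≤ a * L := by nlinarith
  have ht2 : a * L ≤ 2 := by nlinarith
  have hA : 0 ≤ (a * L - a * C) * (1 + a * C * (2 - a * L)) := by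
    apply mul_nonneg (by linarith)
    nlinarith [mul_nonneg (mul_nonneg ha.le hC.le) (by linarith : (0:ℝ) ≤ 2 - a * L)]
  have hB : 0 ≤ q * (a * L - 1) * (a * C) ^ 2 :=
    mul_nonneg (mul_nonneg hq.le (by linarith)) (sq_nonneg _)
  rw [← mul_le_mul_iff_right₀ ha]
  nlinarith [hA, hB]

private lemma tracking_sc2 (a q C L : ℝ) (ha : 0 < a) (hq : 0 < q) (hC : 0 < C) (hCL : C ≤ L)
    (haL : 1 ≤ a * L) (haLq : (q + 1) * (a * L - 1) ≤ 1) :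
    C * (1 - a * C) ^ 2 ≤ L + a * C ^ 2 * ((q + 1) * (a * L - 1) - 1) := by
  have hb : a * C ≤ a * L := by nlinarith
  have hA : 0 ≤ (a * L - a * C) * (1 + (a * C) ^ 2) :=
    mul_nonneg (by linarith) (by positivity)
  have hB : 0 ≤ q * (a * L - 1) * (a * C) ^ 2 :=
    mul_nonneg (mul_nonneg hq.le (by linarith)) (sq_nonneg _)
  rw [← mul_le_mul_iff_right₀ ha]
  nlinarith [hA, hB]

private lemma tracking_sc3 (a q C L : ℝ) (ha : 0 < a) (hq : 0 < q) (hC : 0 < C) (hCL : C ≤ L)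
    (haL : 1 ≤ a * L) :
    a ^ 2 * (q * C) ≤ a * (a * L * (q + 1) - 1) := by
  nlinarith [mul_nonneg (mul_nonneg ha.le hq.le) (sub_nonneg.mpr hCL), sub_nonneg.mpr haL]

private lemma tracking_m_le_sqrt_u (a q C L : ℝ) (ha : 0 < a) (hq : 0 < q) (hC : 0 < C)
    (hCL : C ≤ L) (haL : 1 ≤ a * L) (haLq : (q + 1) * (a * L - 1) ≤ 1) :
    max (a * L - 1) (1 - a * C) ≤ Real.sqrt (L / C + a * C * ((q + 1) * (a * L - 1) - 1)) := by
  apply Real.le_sqrt_of_sq_le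
  have hu : L / C + a * C * ((q + 1) * (a * L - 1) - 1)
      = (L + a * C ^ 2 * ((q + 1) * (a * L - 1) - 1)) / C := by
    field_simp
  rw [hu, le_div_iff₀ hC]
  rcases max_cases (a * L - 1) (1 - a * C) with ⟨hm, _⟩ | ⟨hm, _⟩ <;> rw [hm]
  · nlinarith [tracking_sc1 a q C L ha hq hC hCL haL haLq]
  · nlinarith [tracking_sc2 a q C L ha hq hC hCL haL haLq]

private lemma tracking_a_le_sqrt_v (a q C L : ℝ) (ha : 0 < a) (hq : 0 < q) (hC : 0 < C)
    (hCL : C ≤ L) (haL : 1 ≤ a * L) :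
    a ≤ Real.sqrt (a * (a * L * (q + 1) - 1) / (q * C)) := by
  apply Real.le_sqrt_of_sq_le
  rw [le_div_iff₀ (mul_pos hq hC)]
  exact tracking_sc3 a q C L ha hq hC hCL haL

private lemma tracking_pointwise_step (Δ G eE : E) (a q C L : ℝ) (ha : 0 < a) (hq : 0 < q)
    (hC : 0 < C) (hCL : C ≤ L) (haL : 1 ≤ a * L) (haLq : (q + 1) * (a * L - 1) ≤ 1)
    (h1 : C * ‖Δ‖ ^ 2 ≤ ⟪Δ, G⟫) (h2 : ‖G‖ ≤ L * ‖Δ‖)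
    (h3 : ‖G‖ ^ 2 + C * L * ‖Δ‖ ^ 2 ≤ (C + L) * ⟪Δ, G⟫) :
    ‖Δ - a • (G + eE)‖ ≤ Real.sqrt (L / C + a * C * ((q + 1) * (a * L - 1) - 1)) * ‖Δ‖
      + Real.sqrt (a * (a * L * (q + 1) - 1) / (q * C)) * ‖eE‖ := by
  set m : ℝ := max (a * L - 1) (1 - a * C) with hmdef
  have hm0 : 0 ≤ m := le_trans (by linarith) (le_max_left _ _)
  have hexp : ‖Δ - a • G‖ ^ 2 = ‖Δ‖ ^ 2 - 2 * a * ⟪Δ, G⟫ + a ^ 2 * ‖G‖ ^ 2 := by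
    rw [norm_sub_sq_real, real_inner_smul_right, norm_smul, Real.norm_eq_abs,
      abs_of_pos ha, mul_pow]
    ring
  have hip_le : ⟪Δ, G⟫ ≤ L * ‖Δ‖ ^ 2 := by
    calc ⟪Δ, G⟫ ≤ ‖Δ‖ * ‖G‖ := real_inner_le_norm _ _
      _ ≤ ‖Δ‖ * (L * ‖Δ‖) := mul_le_mul_of_nonneg_left h2 (norm_nonneg _)
      _ = L * ‖Δ‖ ^ 2 := by ring
  have step1 : ‖Δ - a • G‖ ^ 2 ≤ m ^ 2 * ‖Δ‖ ^ 2 := by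
    rw [hexp]
    have hmL : (a * L - 1) ^ 2 ≤ m ^ 2 := by
      have h := le_max_left (a * L - 1) (1 - a * C)
      nlinarith [h, hm0]
    have hmC : (1 - a * C) ^ 2 ≤ m ^ 2 := by
      have h := le_max_right (a * L - 1) (1 - a * C)
      rcases le_total (1 - a * C) 0 with hn | hn
      · have h' : a * C - 1 ≤ a * L - 1 := by nlinarith
        have h'' : a * C - 1 ≤ m := le_trans h' (le_max_left _ _)
        nlinarith [h'', hm0]
      · nlinarith [h, hm0]
    rcases le_total (a * (C + L)) 2 with hcase | hcase
    · have hkey : ‖Δ‖ ^ 2 - 2 * a * ⟪Δ, G⟫ + a ^ 2 * ‖G‖ ^ 2 ≤ (1 - a * C) ^ 2 * ‖Δ‖ ^ 2 := by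
        nlinarith [h3, h1, mul_nonneg (sq_nonneg a) (sq_nonneg ‖G‖),
          mul_nonneg ha.le (sub_nonneg.mpr hcase),
          mul_le_mul_of_nonneg_left h1 (mul_nonneg ha.le (sub_nonneg.mpr hcase)),
          mul_le_mul_of_nonneg_left h3 (sq_nonneg a)]
      calc _ ≤ (1 - a * C) ^ 2 * ‖Δ‖ ^ 2 := hkey
        _ ≤ m ^ 2 * ‖Δ‖ ^ 2 := mul_le_mul_of_nonneg_right hmC (sq_nonneg _)
    · have hkey : ‖Δ‖ ^ 2 - 2 * a * ⟪Δ, G⟫ + a ^ 2 * ‖G‖ ^ 2 ≤ (a * L - 1) ^ 2 * ‖Δ‖ ^ 2 := by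
        nlinarith [mul_le_mul_of_nonneg_left h3 (sq_nonneg a),
          mul_le_mul_of_nonneg_left hip_le (mul_nonneg ha.le (sub_nonneg.mpr hcase))]
      calc _ ≤ (a * L - 1) ^ 2 * ‖Δ‖ ^ 2 := hkey
        _ ≤ m ^ 2 * ‖Δ‖ ^ 2 := mul_le_mul_of_nonneg_right hmL (sq_nonneg _)
  have step2 : ‖Δ - a • G‖ ≤ m * ‖Δ‖ := by
    have h0 : 0 ≤ m * ‖Δ‖ := mul_nonneg hm0 (norm_nonneg _)
    nlinarith [step1, norm_nonneg (Δ - a • G), h0]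
  have step3 : ‖Δ - a • (G + eE)‖ ≤ m * ‖Δ‖ + a * ‖eE‖ := by
    have h : Δ - a • (G + eE) = (Δ - a • G) - a • eE := by
      rw [smul_add]; abel
    rw [h]
    calc ‖(Δ - a • G) - a • eE‖ ≤ ‖Δ - a • G‖ + ‖a • eE‖ := norm_sub_le _ _
      _ ≤ m * ‖Δ‖ + a * ‖eE‖ := by
          rw [norm_smul, Real.norm_eq_abs, abs_of_pos ha]
          exact add_le_add step2 le_rfl
  calc ‖Δ - a • (G + eE)‖ ≤ m * ‖Δ‖ + a * ‖eE‖ := step3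
    _ ≤ _ := add_le_add
        (mul_le_mul_of_nonneg_right
          (tracking_m_le_sqrt_u a q C L ha hq hC hCL haL haLq) (norm_nonneg _))
        (mul_le_mul_of_nonneg_right
          (tracking_a_le_sqrt_v a q C L ha hq hC hCL haL) (norm_nonneg _))

end trackingAux

private lemma tracking_limsup_lemma (d r s : ℕ → ℝ) (sb X : ℝ)
    (hs0 : ∀ k, 0 ≤ s k) (hssb : ∀ k, s k ≤ sb) (hsb1 : sb < 1) (hsb0 : 0 ≤ sb)
    (hrX : ∀ k, r k ≤ X) (hd0 : ∀ k, 0 ≤ d k)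
    (hstep : ∀ k, d (k + 1) ≤ s k * d k + (1 - s k) * r k) :
    Filter.limsup d Filter.atTop ≤ Filter.limsup r Filter.atTop := by
  set R : ℝ := Filter.limsup r Filter.atTop with hR
  have hrbdd : Filter.IsBoundedUnder (· ≤ ·) Filter.atTop r :=
    Filter.isBoundedUnder_of ⟨X, fun k => hrX k⟩
  have hdbdd_below : Filter.IsBoundedUnder (· ≥ ·) Filter.atTop d :=
    Filter.isBoundedUnder_of ⟨0, fun k => hd0 k⟩
  have hdcobdd : Filter.IsCoboundedUnder (· ≤ ·) Filter.atTop d :=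
    hdbdd_below.isCoboundedUnder_le
  apply le_of_forall_pos_le_add
  intro ε hε
  have hRe : Filter.limsup r Filter.atTop < R + ε / 2 := by
    rw [← hR]; linarith
  obtain ⟨K, hK⟩ := (Filter.eventually_atTop).mp (Filter.eventually_lt_of_limsup_lt hRe hrbdd)
  set c : ℝ := max (d K - (R + ε / 2)) 0 with hc
  have hc0 : 0 ≤ c := le_max_right _ _
  have hind : ∀ n, d (K + n) ≤ (R + ε / 2) + sb ^ n * c := by
    intro n
    induction n with
    | zero =>
      simp only [pow_zero, one_mul, Nat.add_zero]
      linarith [le_max_left (d K - (R + ε / 2)) (0:ℝ)]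
    | succ n ih =>
      have hkn : K ≤ K + n := Nat.le_add_right _ _
      have hr' : r (K + n) ≤ R + ε / 2 := (hK _ hkn).le
      have h1 : s (K + n) * d (K + n) ≤ s (K + n) * ((R + ε / 2) + sb ^ n * c) :=
        mul_le_mul_of_nonneg_left ih (hs0 _)
      have h2 : (1 - s (K + n)) * r (K + n) ≤ (1 - s (K + n)) * (R + ε / 2) := by
        apply mul_le_mul_of_nonneg_left hr'
        linarith [hssb (K + n)]
      have h3 : s (K + n) * (sb ^ n * c) ≤ sb * (sb ^ n * c) :=
        mul_le_mul_of_nonneg_right (hssb _) (mul_nonneg (pow_nonneg hsb0 _) hc0)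
      calc d (K + (n + 1)) = d ((K + n) + 1) := by ring_nf
        _ ≤ s (K + n) * d (K + n) + (1 - s (K + n)) * r (K + n) := hstep _
        _ ≤ s (K + n) * ((R + ε / 2) + sb ^ n * c) + (1 - s (K + n)) * (R + ε / 2) :=
            add_le_add h1 h2
        _ = (R + ε / 2) + s (K + n) * (sb ^ n * c) := by ring
        _ ≤ (R + ε / 2) + sb * (sb ^ n * c) := by linarith [h3]
        _ = (R + ε / 2) + sb ^ (n + 1) * c := by ring
  have htend : Filter.Tendsto (fun n : ℕ => sb ^ n * c) Filter.atTop (nhds 0) := by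
    simpa using (tendsto_pow_atTop_nhds_zero_of_lt_one hsb0 hsb1).mul_const c
  obtain ⟨N, hN⟩ := (Filter.eventually_atTop).mp
    (htend.eventually (eventually_lt_nhds (by linarith : (0:ℝ) < ε / 2)))
  apply Filter.limsup_le_of_le hdcobdd
  rw [Filter.eventually_atTop]
  refine ⟨K + N, fun k hk => ?_⟩
  have hkK : K ≤ k := le_trans (Nat.le_add_right _ _) hk
  have hkn : k = K + (k - K) := by omega
  have hNle : N ≤ k - K := by omega
  have hpow : sb ^ (k - K) * c ≤ sb ^ N * c := by
    apply mul_le_mul_of_nonneg_right _ hc0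
    exact pow_le_pow_of_le_one hsb0 hsb1.le hNle
  have hfin := hind (k - K)
  rw [← hkn] at hfin
  have hNc : sb ^ N * c < ε / 2 := hN N le_rfl
  linarith

private lemma tracking_first_moment {Ω : Type} [MeasurableSpace Ω] (P : Measure Ω)
    [IsProbabilityMeasure P] (X : Ω → ℝ) (hX : MemLp X 2 P) (hpos : ∀ ω, 0 ≤ X ω)
    (M : ℝ) (hM : 0 ≤ M) (hsq : (∫ ω, X ω ^ 2 ∂P) ≤ M ^ 2) :
    (∫ ω, X ω ∂P) ≤ M := by
  have h1 : Integrable X P := hX.integrable one_le_two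
  have h2 : Integrable (fun ω => X ω ^ 2) P := hX.integrable_sq
  set t : ℝ := ∫ ω, X ω ∂P with ht
  have ht0 : 0 ≤ t := integral_nonneg hpos
  have hkey : 0 ≤ (∫ ω, X ω ^ 2 ∂P) - t ^ 2 := by
    have hint : (∫ ω, (X ω - t) ^ 2 ∂P) = (∫ ω, X ω ^ 2 ∂P) - t ^ 2 := by
      have hexp : (∫ ω, (X ω - t) ^ 2 ∂P)
          = ∫ ω, (fun w => X w ^ 2 + t ^ 2) ω - (fun w => 2 * t * X w) ω ∂P := by
        congr 1; ext ω; ring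
      have hf : Integrable (fun w => X w ^ 2 + t ^ 2) P := h2.add (integrable_const _)
      have hg : Integrable (fun w => 2 * t * X w) P := h1.const_mul _
      rw [hexp, integral_sub hf hg]
      beta_reduce
      rw [integral_add h2 (integrable_const _), MeasureTheory.integral_const_mul, integral_const]
      simp [← ht]
      ring
    have hnn : (0:ℝ) ≤ ∫ ω, (X ω - t) ^ 2 ∂P :=
      integral_nonneg (fun ω => sq_nonneg (X ω - t))
    rw [hint] at hnn
    linarith
  nlinarith [hkey, hsq]


/-- Asymptotic MAD bound: under the bounded-drift time-varying stochastic
approximation setting, if additionally `u_k ≤ ū < 1` for all `k` and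
`0 < x̲ ≤ (M_k√(v_k)+B_k)/(1−√(u_k)) ≤ X < ∞` for all `k`, then
`limsup_k E‖θ̂_k − θ*_k‖ ≤ limsup_k (M_k√(v_k)+B_k)/(1−√(u_k))`. -/
theorem stmt_1 {p : ℕ} (hp : 1 ≤ p)
    {Ω : Type} [MeasurableSpace Ω] (P : Measure Ω) [IsProbabilityMeasure P]
    (θhat θstar e : ℕ → Ω → EuclideanSpace ℝ (Fin p))
    (f : ℕ → Ω → EuclideanSpace ℝ (Fin p) → ℝ)
    (g : ℕ → Ω → EuclideanSpace ℝ (Fin p) → EuclideanSpace ℝ (Fin p))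
    (a q C L M B u v : ℕ → ℝ)
    (hmeas1 : ∀ k, Measurable (θhat k))
    (hmeas2 : ∀ k, Measurable (θstar k))
    (hmeas3 : ∀ k, Measurable (e k))
    (hCpos : ∀ k, 0 < C k) (hM : ∀ k, 0 ≤ M k) (hB : ∀ k, 0 ≤ B k)
    (hreg : ∀ k, ∀ᵐ ω ∂P,
      ContDiff ℝ 1 (f k ω) ∧
      (∀ x, HasGradientAt (f k ω) (g k ω x) x) ∧
      (∀ x y : EuclideanSpace ℝ (Fin p),
        C k * ‖x - y‖ ^ 2 ≤ (inner ℝ (x - y) (g k ω x - g k ω y) : ℝ)) ∧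
      (∀ x y : EuclideanSpace ℝ (Fin p), ‖g k ω x - g k ω y‖ ≤ L k * ‖x - y‖) ∧
      g k ω (θstar k ω) = 0)
    (hrec : ∀ k, ∀ᵐ ω ∂P,
      θhat (k + 1) ω = θhat k ω - a k • (g k ω (θhat k ω) + e k ω))
    (heL2 : ∀ k, MemLp (e k) 2 P)
    (heM : ∀ k, (∫ ω, ‖e k ω‖ ^ 2 ∂P) ≤ M k ^ 2)
    (hdL2 : ∀ k, MemLp (fun ω => θstar (k + 1) ω - θstar k ω) 2 P)
    (hdB : ∀ k, (∫ ω, ‖θstar (k + 1) ω - θstar k ω‖ ^ 2 ∂P) ≤ B k ^ 2)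
    (ha : ∀ k, 0 < a k) (hq : ∀ k, 0 < q k)
    (haL : ∀ k, 1 ≤ a k * L k)
    (haLq : ∀ k, (q k + 1) * (a k * L k - 1) ≤ 1)
    (hu : ∀ k, u k = L k / C k + a k * C k * ((q k + 1) * (a k * L k - 1) - 1))
    (hv : ∀ k, v k = a k * (a k * L k * (q k + 1) - 1) / (q k * C k))
    (hint : ∀ k, Integrable (fun ω => ‖θhat k ω - θstar k ω‖) P)
    (ubar : ℝ) (hubar1 : ubar < 1) (hubar : ∀ k, u k ≤ ubar)
    (xlo X : ℝ) (hxlo : 0 < xlo) (hxloX : xlo ≤ X)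
    (hratio : ∀ k,
      xlo ≤ (M k * Real.sqrt (v k) + B k) / (1 - Real.sqrt (u k)) ∧
        (M k * Real.sqrt (v k) + B k) / (1 - Real.sqrt (u k)) ≤ X) :
    Filter.limsup (fun k => ∫ ω, ‖θhat k ω - θstar k ω‖ ∂P) Filter.atTop ≤
      Filter.limsup
        (fun k => (M k * Real.sqrt (v k) + B k) / (1 - Real.sqrt (u k)))
        Filter.atTop := by
  haveI : Nonempty (Fin p) := ⟨⟨0, hp⟩⟩
  set nd : ℕ → ℝ := fun k => ∫ ω, ‖θhat k ω - θstar k ω‖ ∂P with hnd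
  set r : ℕ → ℝ := fun k => (M k * Real.sqrt (v k) + B k) / (1 - Real.sqrt (u k)) with hrdef
  set s : ℕ → ℝ := fun k => Real.sqrt (u k) with hsdef
  set sb : ℝ := Real.sqrt (max ubar 0) with hsbdef
  have hsb0 : 0 ≤ sb := Real.sqrt_nonneg _
  have hsb1 : sb < 1 := by
    rw [hsbdef, Real.sqrt_lt' one_pos]
    simpa using max_lt hubar1 one_pos
  have hssb : ∀ k, s k ≤ sb := fun k =>
    Real.sqrt_le_sqrt (le_trans (hubar k) (le_max_left _ _))
  have hs0 : ∀ k, 0 ≤ s k := fun k => Real.sqrt_nonneg _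
  have hs1 : ∀ k, s k < 1 := fun k => lt_of_le_of_lt (hssb k) hsb1
  have hnd0 : ∀ k, 0 ≤ nd k := fun k => integral_nonneg fun ω => norm_nonneg _
  have hstep : ∀ k, nd (k + 1) ≤ s k * nd k + (1 - s k) * r k := by
    intro k
    have hne : (1:ℝ) - s k ≠ 0 := by linarith [hs1 k]
    have hrk : (1 - s k) * r k = M k * Real.sqrt (v k) + B k := by
      rw [hrdef]
      simp only
      rw [hsdef]
      simp only
      rw [mul_comm, div_mul_cancel₀ _ hne]
    rw [hrk]
    -- a.e. pointwise bound
    have hptw : ∀ᵐ ω ∂P, ‖θhat (k + 1) ω - θstar (k + 1) ω‖ ≤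
        s k * ‖θhat k ω - θstar k ω‖ + Real.sqrt (v k) * ‖e k ω‖
          + ‖θstar (k + 1) ω - θstar k ω‖ := by
      filter_upwards [hreg k, hrec k] with ω hregω hrecω
      obtain ⟨hcd, hgrad, hmono, hlip, hzero⟩ := hregω
      have hCL : C k ≤ L k := by
        set x0 : EuclideanSpace ℝ (Fin p) := EuclideanSpace.single ⟨0, hp⟩ (1:ℝ) with hx0def
        have hx0 : ‖x0‖ = 1 := by
          rw [hx0def, EuclideanSpace.norm_single]; norm_num
        have h1 := hmono x0 0
        have h2 := hlip x0 0
        have h3 := real_inner_le_norm (x0 - 0) (g k ω x0 - g k ω 0)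
        rw [sub_zero] at h1 h2 h3
        rw [hx0] at h1 h2 h3
        have h4 : C k ≤ ‖g k ω x0 - g k ω 0‖ := by
          calc C k = C k * 1 ^ 2 := by ring
            _ ≤ (inner ℝ x0 (g k ω x0 - g k ω 0) : ℝ) := h1
            _ ≤ 1 * ‖g k ω x0 - g k ω 0‖ := h3
            _ = ‖g k ω x0 - g k ω 0‖ := one_mul _
        calc C k ≤ ‖g k ω x0 - g k ω 0‖ := h4
          _ ≤ L k * 1 := h2
          _ = L k := mul_one _
      have hinterp := tracking_interp (f k ω) (g k ω) (C k) (L k) (hCpos k) hCL hgrad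
        hmono hlip (θhat k ω) (θstar k ω)
      have hkey := tracking_pointwise_step (θhat k ω - θstar k ω)
        (g k ω (θhat k ω) - g k ω (θstar k ω)) (e k ω) (a k) (q k) (C k) (L k)
        (ha k) (hq k) (hCpos k) hCL (haL k) (haLq k)
        (hmono (θhat k ω) (θstar k ω)) (hlip (θhat k ω) (θstar k ω)) hinterp
      rw [← hu k, ← hv k] at hkey
      have heq : θhat (k + 1) ω - θstar k ω = (θhat k ω - θstar k ω)
          - a k • ((g k ω (θhat k ω) - g k ω (θstar k ω)) + e k ω) := by
        rw [hrecω, hzero, sub_zero]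
        abel
      calc ‖θhat (k + 1) ω - θstar (k + 1) ω‖
          = ‖(θhat (k + 1) ω - θstar k ω) - (θstar (k + 1) ω - θstar k ω)‖ := by
            congr 1; abel
        _ ≤ ‖θhat (k + 1) ω - θstar k ω‖ + ‖θstar (k + 1) ω - θstar k ω‖ := norm_sub_le _ _
        _ ≤ (s k * ‖θhat k ω - θstar k ω‖ + Real.sqrt (v k) * ‖e k ω‖)
            + ‖θstar (k + 1) ω - θstar k ω‖ := by
            apply add_le_add _ le_rfl
            rw [heq]
            exact hkey
        _ = s k * ‖θhat k ω - θstar k ω‖ + Real.sqrt (v k) * ‖e k ω‖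
            + ‖θstar (k + 1) ω - θstar k ω‖ := by ring
    -- integrate
    have hie : Integrable (fun ω => ‖e k ω‖) P := ((heL2 k).integrable one_le_two).norm
    have hidr : Integrable (fun ω => ‖θstar (k + 1) ω - θstar k ω‖) P :=
      ((hdL2 k).integrable one_le_two).norm
    have hRHSint : Integrable (fun ω => s k * ‖θhat k ω - θstar k ω‖
        + Real.sqrt (v k) * ‖e k ω‖ + ‖θstar (k + 1) ω - θstar k ω‖) P :=
      (((hint k).const_mul _).add (hie.const_mul _)).add hidr
    have hmono_int := integral_mono_ae (hint (k + 1)) hRHSint hptw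
    have hsplit : (∫ ω, (s k * ‖θhat k ω - θstar k ω‖ + Real.sqrt (v k) * ‖e k ω‖
          + ‖θstar (k + 1) ω - θstar k ω‖) ∂P)
        = s k * (∫ ω, ‖θhat k ω - θstar k ω‖ ∂P)
          + Real.sqrt (v k) * (∫ ω, ‖e k ω‖ ∂P)
          + (∫ ω, ‖θstar (k + 1) ω - θstar k ω‖ ∂P) := by
      have hi1 : Integrable (fun ω => s k * ‖θhat k ω - θstar k ω‖) P := (hint k).const_mul _
      have hi2 : Integrable (fun ω => Real.sqrt (v k) * ‖e k ω‖) P := hie.const_mul _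
      have hi12 : Integrable
          (fun ω => s k * ‖θhat k ω - θstar k ω‖ + Real.sqrt (v k) * ‖e k ω‖) P := hi1.add hi2
      rw [integral_add hi12 hidr, integral_add hi1 hi2,
        MeasureTheory.integral_const_mul, MeasureTheory.integral_const_mul]
    have hEe : (∫ ω, ‖e k ω‖ ∂P) ≤ M k :=
      tracking_first_moment P _ ((heL2 k).norm) (fun ω => norm_nonneg _) (M k) (hM k) (heM k)
    have hEd : (∫ ω, ‖θstar (k + 1) ω - θstar k ω‖ ∂P) ≤ B k :=
      tracking_first_moment P _ ((hdL2 k).norm) (fun ω => norm_nonneg _) (B k) (hB k) (hdB k)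
    have hv0 : 0 ≤ Real.sqrt (v k) := Real.sqrt_nonneg _
    calc nd (k + 1) ≤ s k * (∫ ω, ‖θhat k ω - θstar k ω‖ ∂P)
          + Real.sqrt (v k) * (∫ ω, ‖e k ω‖ ∂P)
          + (∫ ω, ‖θstar (k + 1) ω - θstar k ω‖ ∂P) := by
          rw [← hsplit]; exact hmono_int
      _ ≤ s k * nd k + (M k * Real.sqrt (v k) + B k) := by
          have := mul_le_mul_of_nonneg_left hEe hv0
          have hnd' : s k * (∫ ω, ‖θhat k ω - θstar k ω‖ ∂P) = s k * nd k := rfl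
          rw [hnd']
          linarith [mul_le_mul_of_nonneg_left hEe hv0, hEd]
  exact tracking_limsup_lemma nd r s sb X hs0 hssb hsb1 hsb0
    (fun k => (hratio k).2) hnd0 hstep
end

section
/- Under the time-varying stochastic approximation setting described in the context, and assuming in addition that ‖θ̂_k − θ*_k‖ is square-integrable for every k, the root-mean-squared error satisfies, for every k ∈ ℕ, √(E‖θ̂_{k+1} − θ*_{k+1}‖²) ≤ √(u_k · E‖θ̂_k − θ*_k‖²) + M_k·√(v_k) + B_k. -/
open MeasureTheory

open InnerProductSpace ENNReal

section Aux
open InnerProductSpace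

variable {E : Type*} [NormedAddCommGroup E] [InnerProductSpace ℝ E] [CompleteSpace E]

lemma line_hasDerivAt {F : E → ℝ} {G : E → E}
    (hgrad : ∀ x, HasGradientAt F (G x) x) (x d : E) (s : ℝ) :
    HasDerivAt (fun r : ℝ => F (x + r • d)) (inner ℝ (G (x + s • d)) d : ℝ) s := by
  have hline : HasDerivAt (fun r : ℝ => x + r • d) d s := by
    simpa using ((hasDerivAt_id s).smul_const d).const_add x
  have h1 : HasFDerivAt F (toDual ℝ E (G (x + s • d))) (x + s • d) :=
    (hgrad (x + s • d)).hasFDerivAt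
  have h := h1.comp_hasDerivAt s hline
  simp only [toDual_apply_apply] at h
  exact h

lemma convex_lower {F : E → ℝ} {G : E → E}
    (hgrad : ∀ x, HasGradientAt F (G x) x)
    (hmono : ∀ x y : E, 0 ≤ (inner ℝ (x - y) (G x - G y) : ℝ)) (x y : E) :
    F x + inner ℝ (G x) (y - x) ≤ F y := by
  set d := y - x with hd
  set φ : ℝ → ℝ := fun r => F (x + r • d) - r * inner ℝ (G x) d with hφ
  have hder : ∀ s : ℝ, HasDerivAt φ ((inner ℝ (G (x + s • d)) d : ℝ) - inner ℝ (G x) d) s := by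
    intro s
    have h2 : HasDerivAt (fun r : ℝ => r * (inner ℝ (G x) d : ℝ)) (inner ℝ (G x) d : ℝ) s := by
      simpa using (hasDerivAt_id s).mul_const (inner ℝ (G x) d : ℝ)
    exact (line_hasDerivAt hgrad x d s).sub h2
  have hmonoφ : MonotoneOn φ (Set.Icc (0:ℝ) 1) := by
    apply monotoneOn_of_deriv_nonneg (convex_Icc 0 1)
    · intro s hs
      exact ((hder s).differentiableAt).continuousAt.continuousWithinAt
    · intro s hs
      exact ((hder s).differentiableAt).differentiableWithinAt
    · intro s hs
      rw [(hder s).deriv]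
      have hs0 : 0 < s := (Set.mem_Ioo.mp (by simpa using hs)).1
      have := hmono (x + s • d) x
      simp only [add_sub_cancel_left] at this
      rw [inner_smul_left] at this
      have h2 : 0 ≤ (inner ℝ d (G (x + s • d) - G x) : ℝ) := by
        have := (mul_nonneg_iff_of_pos_left hs0).mp (by simpa using this)
        simpa using this
      rw [real_inner_comm] at h2
      rw [inner_sub_left] at h2
      linarith
  have := hmonoφ (Set.left_mem_Icc.mpr zero_le_one) (Set.right_mem_Icc.mpr zero_le_one) zero_le_one
  simp only [hφ, zero_smul, add_zero, one_smul, zero_mul, sub_zero, one_mul] at this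
  have hxy : x + d = y := by simp [hd]
  rw [hxy] at this
  linarith [this]

lemma descent_upper {F : E → ℝ} {G : E → E} {L : ℝ} (hL : 0 ≤ L)
    (hgrad : ∀ x, HasGradientAt F (G x) x)
    (hlip : ∀ x y : E, ‖G x - G y‖ ≤ L * ‖x - y‖) (x y : E) :
    F y ≤ F x + inner ℝ (G x) (y - x) + L / 2 * ‖y - x‖ ^ 2 := by
  set d := y - x with hd
  set ψ : ℝ → ℝ := fun r => F (x + r • d) - r * inner ℝ (G x) d - L * r ^ 2 / 2 * ‖d‖ ^ 2 with hψ
  have hder : ∀ s : ℝ, HasDerivAt ψ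
      ((inner ℝ (G (x + s • d)) d : ℝ) - inner ℝ (G x) d - L * s * ‖d‖ ^ 2) s := by
    intro s
    have h2 : HasDerivAt (fun r : ℝ => r * (inner ℝ (G x) d : ℝ)) (inner ℝ (G x) d : ℝ) s := by
      simpa using (hasDerivAt_id s).mul_const (inner ℝ (G x) d : ℝ)
    have h3 : HasDerivAt (fun r : ℝ => L * r ^ 2 / 2 * ‖d‖ ^ 2) (L * s * ‖d‖ ^ 2) s := by
      have : HasDerivAt (fun r : ℝ => r ^ 2) (2 * s) s := by
        simpa using hasDerivAt_pow 2 s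
      have := ((this.const_mul L).div_const 2).mul_const (‖d‖ ^ 2)
      rw [show L * s * ‖d‖ ^ 2 = L * (2 * s) / 2 * ‖d‖ ^ 2 by ring]
      exact this
    exact ((line_hasDerivAt hgrad x d s).sub h2).sub h3
  have hanti : AntitoneOn ψ (Set.Icc (0:ℝ) 1) := by
    apply antitoneOn_of_deriv_nonpos (convex_Icc 0 1)
    · intro s hs
      exact ((hder s).differentiableAt).continuousAt.continuousWithinAt
    · intro s hs
      exact ((hder s).differentiableAt).differentiableWithinAt
    · intro s hs
      rw [(hder s).deriv]
      have hs' : 0 < s ∧ s < 1 := Set.mem_Ioo.mp (by simpa using hs)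
      have hcs : (inner ℝ (G (x + s • d)) d : ℝ) - inner ℝ (G x) d ≤ L * s * ‖d‖ ^ 2 := by
        have h1 : (inner ℝ (G (x + s • d) - G x) d : ℝ) ≤ ‖G (x + s • d) - G x‖ * ‖d‖ :=
          real_inner_le_norm _ _
        have h2 : ‖G (x + s • d) - G x‖ ≤ L * ‖s • d‖ := by simpa using hlip (x + s • d) x
        have h3 : ‖s • d‖ = s * ‖d‖ := by
          rw [norm_smul, Real.norm_eq_abs, abs_of_pos hs'.1]
        rw [inner_sub_left] at h1
        have h4 := mul_le_mul_of_nonneg_right h2 (norm_nonneg d)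
        rw [h3] at h4
        nlinarith [h4]
      linarith
  have h01 := hanti (Set.left_mem_Icc.mpr zero_le_one) (Set.right_mem_Icc.mpr zero_le_one)
    zero_le_one
  simp only [hψ, zero_smul, add_zero, one_smul, zero_mul, sub_zero, one_mul, one_pow,
    zero_pow, mul_zero, zero_div] at h01
  have hxy : x + d = y := by simp [hd]
  rw [hxy] at h01
  linarith

lemma cocoercive {F : E → ℝ} {G : E → E} {L : ℝ} (hL : 0 < L)
    (hgrad : ∀ x, HasGradientAt F (G x) x)
    (hmono : ∀ x y : E, 0 ≤ (inner ℝ (x - y) (G x - G y) : ℝ))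
    (hlip : ∀ x y : E, ‖G x - G y‖ ≤ L * ‖x - y‖) (x y : E) :
    ‖G x - G y‖ ^ 2 ≤ L * inner ℝ (x - y) (G x - G y) := by
  have key : ∀ u w : E, F u + inner ℝ (G u) (w - u) + ‖G w - G u‖ ^ 2 / (2 * L) ≤ F w := by
    intro u w
    set z := w - (1 / L) • (G w - G u) with hz
    have hA : F u + inner ℝ (G u) (z - u) ≤ F z := convex_lower hgrad hmono u z
    have hB : F z ≤ F w + inner ℝ (G w) (z - w) + L / 2 * ‖z - w‖ ^ 2 :=
      descent_upper hL.le hgrad hlip w z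
    have hzw : z - w = -((1 / L) • (G w - G u)) := by rw [hz]; abel
    have hnz : ‖z - w‖ ^ 2 = (1 / L) ^ 2 * ‖G w - G u‖ ^ 2 := by
      rw [hzw, norm_neg, norm_smul, Real.norm_eq_abs, abs_of_pos (by positivity), mul_pow]
    have hiz : (inner ℝ (G w) (z - w) : ℝ) = -(1 / L) * inner ℝ (G w) (G w - G u) := by
      rw [hzw, inner_neg_right, inner_smul_right]; ring
    have hiu : (inner ℝ (G u) (z - u) : ℝ)
        = inner ℝ (G u) (w - u) - (1 / L) * inner ℝ (G u) (G w - G u) := by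
      rw [hz, sub_right_comm, inner_sub_right, inner_smul_right]
    have hdiff : (inner ℝ (G w) (G w - G u) : ℝ) - inner ℝ (G u) (G w - G u)
        = ‖G w - G u‖ ^ 2 := by
      rw [← inner_sub_left, real_inner_self_eq_norm_sq]
    rw [hiz] at hB
    rw [hiu] at hA
    rw [hnz] at hB
    have hLN : L / 2 * ((1 / L) ^ 2 * ‖G w - G u‖ ^ 2) = ‖G w - G u‖ ^ 2 / (2 * L) := by
      field_simp
    rw [hLN] at hB
    have h5 : (1 / L) * ((inner ℝ (G w) (G w - G u) : ℝ) - inner ℝ (G u) (G w - G u))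
        = (1 / L) * ‖G w - G u‖ ^ 2 := by rw [hdiff]
    have h6 : (1 / L) * ‖G w - G u‖ ^ 2 - ‖G w - G u‖ ^ 2 / (2 * L)
        = ‖G w - G u‖ ^ 2 / (2 * L) := by field_simp; ring
    linarith
  have h1 := key x y
  have h2 := key y x
  have hsym : ‖G x - G y‖ = ‖G y - G x‖ := by rw [← norm_neg]; congr 1; abel
  have hin : (inner ℝ (G x) (y - x) : ℝ) + inner ℝ (G y) (x - y)
      = -inner ℝ (x - y) (G x - G y) := by
    simp only [inner_sub_left, inner_sub_right, real_inner_comm (G x), real_inner_comm (G y)]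
    ring
  have hsum := add_le_add h1 h2
  rw [hsym] at hsum ⊢
  have hNN : ‖G y - G x‖ ^ 2 / (2 * L) + ‖G y - G x‖ ^ 2 / (2 * L)
      = ‖G y - G x‖ ^ 2 / L := by field_simp; ring
  have h9 : ‖G y - G x‖ ^ 2 / L ≤ (inner ℝ (x - y) (G x - G y) : ℝ) := by linarith
  rw [div_le_iff₀ hL] at h9
  linarith

lemma toReal_eLpNorm_two {α : Type*} [MeasurableSpace α] {μ : Measure α} {H : Type*}
    [NormedAddCommGroup H] {f : α → H} (hf : MemLp f 2 μ) :
    (eLpNorm f 2 μ).toReal = Real.sqrt (∫ x, ‖f x‖ ^ 2 ∂μ) := by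
  rw [hf.eLpNorm_eq_integral_rpow_norm two_ne_zero ENNReal.ofNat_ne_top,
    ENNReal.toReal_ofReal (by positivity)]
  have h2 : (2 : ℝ≥0∞).toReal = (2 : ℝ) := by norm_num
  simp_rw [h2]
  rw [show (2:ℝ) = ((2:ℕ):ℝ) by norm_num]
  simp_rw [Real.rpow_natCast]
  rw [Real.sqrt_eq_rpow]
  norm_num

end Aux


set_option maxHeartbeats 2000000

/-- RMS bound under the bounded-drift time-varying stochastic approximation setting:
for every `k`,
`√(E‖θ̂_{k+1} − θ*_{k+1}‖²) ≤ √(u_k·E‖θ̂_k − θ*_k‖²) + M_k·√(v_k) + B_k`. -/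
theorem stmt_2 {p : ℕ} (hp : 1 ≤ p)
    {Ω : Type} [MeasurableSpace Ω] (P : Measure Ω) [IsProbabilityMeasure P]
    (θhat θstar e : ℕ → Ω → EuclideanSpace ℝ (Fin p))
    (f : ℕ → Ω → EuclideanSpace ℝ (Fin p) → ℝ)
    (g : ℕ → Ω → EuclideanSpace ℝ (Fin p) → EuclideanSpace ℝ (Fin p))
    (a q C L M B u v : ℕ → ℝ)
    (hmeas1 : ∀ k, Measurable (θhat k))
    (hmeas2 : ∀ k, Measurable (θstar k))
    (hmeas3 : ∀ k, Measurable (e k))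
    (hCpos : ∀ k, 0 < C k) (hM : ∀ k, 0 ≤ M k) (hB : ∀ k, 0 ≤ B k)
    (hreg : ∀ k, ∀ᵐ ω ∂P,
      ContDiff ℝ 1 (f k ω) ∧
      (∀ x, HasGradientAt (f k ω) (g k ω x) x) ∧
      (∀ x y : EuclideanSpace ℝ (Fin p),
        C k * ‖x - y‖ ^ 2 ≤ (inner ℝ (x - y) (g k ω x - g k ω y) : ℝ)) ∧
      (∀ x y : EuclideanSpace ℝ (Fin p), ‖g k ω x - g k ω y‖ ≤ L k * ‖x - y‖) ∧
      g k ω (θstar k ω) = 0)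
    (hrec : ∀ k, ∀ᵐ ω ∂P,
      θhat (k + 1) ω = θhat k ω - a k • (g k ω (θhat k ω) + e k ω))
    (heL2 : ∀ k, MemLp (e k) 2 P)
    (heM : ∀ k, (∫ ω, ‖e k ω‖ ^ 2 ∂P) ≤ M k ^ 2)
    (hdL2 : ∀ k, MemLp (fun ω => θstar (k + 1) ω - θstar k ω) 2 P)
    (hdB : ∀ k, (∫ ω, ‖θstar (k + 1) ω - θstar k ω‖ ^ 2 ∂P) ≤ B k ^ 2)
    (ha : ∀ k, 0 < a k) (hq : ∀ k, 0 < q k)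
    (haL : ∀ k, 1 ≤ a k * L k)
    (haLq : ∀ k, (q k + 1) * (a k * L k - 1) ≤ 1)
    (hu : ∀ k, u k = L k / C k + a k * C k * ((q k + 1) * (a k * L k - 1) - 1))
    (hv : ∀ k, v k = a k * (a k * L k * (q k + 1) - 1) / (q k * C k))
    (hint : ∀ k, Integrable (fun ω => ‖θhat k ω - θstar k ω‖ ^ 2) P) :
    ∀ k, Real.sqrt (∫ ω, ‖θhat (k + 1) ω - θstar (k + 1) ω‖ ^ 2 ∂P) ≤
      Real.sqrt (u k * ∫ ω, ‖θhat k ω - θstar k ω‖ ^ 2 ∂P) +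
        M k * Real.sqrt (v k) + B k := by
  intro k
  -- ### scalar preliminaries
  have hP0 : (MeasureTheory.ae P).NeBot := ae_neBot.2 (IsProbabilityMeasure.ne_zero P)
  have hCL : C k ≤ L k := by
    obtain ⟨ω₀, -, -, hsc, hlip, -⟩ := (hreg k).exists
    set δ : EuclideanSpace ℝ (Fin p) := EuclideanSpace.single ⟨0, hp⟩ (1:ℝ) with hδ
    have hδ1 : ‖δ‖ = 1 := by rw [hδ, EuclideanSpace.norm_single]; norm_num
    have h1 := hsc (θstar k ω₀ + δ) (θstar k ω₀)
    have h2 := hlip (θstar k ω₀ + δ) (θstar k ω₀)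
    have h3 := real_inner_le_norm δ (g k ω₀ (θstar k ω₀ + δ) - g k ω₀ (θstar k ω₀))
    rw [add_sub_cancel_left] at h1 h2
    rw [hδ1] at h1 h2 h3
    linarith
  have hL0 : 0 < L k := lt_of_lt_of_le (hCpos k) hCL
  have hak := ha k; have hqk := hq k; have hCk := hCpos k
  have hs1 : 1 ≤ a k * L k := haL k
  have hs2 : a k * L k ≤ 2 := by nlinarith [haLq k, hqk, hs1]
  have hts : a k * C k ≤ a k * L k := by nlinarith
  set K : ℝ := 1 - (a k * C k) * (2 - a k * L k) with hK
  have hK0 : 0 ≤ K := by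
    have h1 : (a k * C k) * (2 - a k * L k) ≤ (a k * L k) * (2 - a k * L k) := by nlinarith
    nlinarith [sq_nonneg (a k * L k - 1)]
  have hKu : K ≤ u k := by
    rw [hu k, hK]
    have hd1 : 1 ≤ L k / C k := (one_le_div hCk).mpr hCL
    have hnn : 0 ≤ (a k * C k) * q k * (a k * L k - 1) :=
      mul_nonneg (by positivity) (sub_nonneg.2 hs1)
    nlinarith [hd1, hnn]
  have hav : a k ^ 2 ≤ v k := by
    rw [hv k, le_div_iff₀ (by positivity)]
    nlinarith [mul_nonneg (mul_nonneg hak.le hqk.le) (sub_nonneg.2 hts),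
      mul_nonneg hak.le (sub_nonneg.2 hs1)]
  have hav' : a k ≤ Real.sqrt (v k) := by
    calc a k = Real.sqrt (a k ^ 2) := (Real.sqrt_sq hak.le).symm
    _ ≤ Real.sqrt (v k) := Real.sqrt_le_sqrt hav
  -- ### pointwise a.e. bound
  have hptwise : ∀ᵐ ω ∂P, ‖θhat (k+1) ω - θstar k ω‖ ≤
      Real.sqrt K * ‖θhat k ω - θstar k ω‖ + a k * ‖e k ω‖ := by
    filter_upwards [hreg k, hrec k] with ω hregω hrecω
    obtain ⟨-, hgrad, hsc, hlip, hzero⟩ := hregω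
    set b : EuclideanSpace ℝ (Fin p) := θhat k ω - θstar k ω with hb
    set h : EuclideanSpace ℝ (Fin p) := g k ω (θhat k ω) with hh
    have hbh : C k * ‖b‖ ^ 2 ≤ (inner ℝ b h : ℝ) := by
      have := hsc (θhat k ω) (θstar k ω)
      rwa [hzero, sub_zero] at this
    have hmono : ∀ x y : EuclideanSpace ℝ (Fin p),
        0 ≤ (inner ℝ (x - y) (g k ω x - g k ω y) : ℝ) :=
      fun x y => le_trans (by positivity) (hsc x y)
    have hco : ‖h‖ ^ 2 ≤ L k * (inner ℝ b h : ℝ) := by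
      have := cocoercive hL0 hgrad hmono hlip (θhat k ω) (θstar k ω)
      rwa [hzero, sub_zero] at this
    have hbh0 : 0 ≤ (inner ℝ b h : ℝ) := le_trans (by positivity) hbh
    have hsq : ‖b - a k • h‖ ^ 2 ≤ K * ‖b‖ ^ 2 := by
      have hexp : ‖b - a k • h‖ ^ 2
          = ‖b‖ ^ 2 - 2 * a k * (inner ℝ b h : ℝ) + a k ^ 2 * ‖h‖ ^ 2 := by
        rw [norm_sub_sq_real, real_inner_smul_right, norm_smul, Real.norm_eq_abs,
          mul_pow, sq_abs]
        ring
      have c1 : a k ^ 2 * ‖h‖ ^ 2 ≤ a k ^ 2 * (L k * (inner ℝ b h : ℝ)) :=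
        mul_le_mul_of_nonneg_left hco (sq_nonneg _)
      have h2s : 0 ≤ a k * (2 - a k * L k) := mul_nonneg hak.le (by linarith)
      have c3 : a k * (2 - a k * L k) * (C k * ‖b‖ ^ 2)
          ≤ a k * (2 - a k * L k) * (inner ℝ b h : ℝ) :=
        mul_le_mul_of_nonneg_left hbh h2s
      rw [hK]
      nlinarith [c1, c3, hexp]
    have hnorm1 : ‖b - a k • h‖ ≤ Real.sqrt K * ‖b‖ := by
      have h5 := Real.sqrt_le_sqrt hsq
      rwa [Real.sqrt_sq (norm_nonneg _), Real.sqrt_mul hK0,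
        Real.sqrt_sq (norm_nonneg b)] at h5
    have hYeq : θhat (k+1) ω - θstar k ω = (b - a k • h) - a k • e k ω := by
      rw [hrecω, smul_add, hb, hh]; abel
    calc ‖θhat (k+1) ω - θstar k ω‖ = ‖(b - a k • h) - a k • e k ω‖ := by rw [hYeq]
      _ ≤ ‖b - a k • h‖ + ‖a k • e k ω‖ := norm_sub_le _ _
      _ ≤ Real.sqrt K * ‖b‖ + a k * ‖e k ω‖ := by
          rw [norm_smul, Real.norm_eq_abs, abs_of_pos hak]
          exact add_le_add hnorm1 le_rfl
  -- ### L² bookkeeping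
  have hbmeas : AEStronglyMeasurable (fun ω => θhat k ω - θstar k ω) P :=
    ((hmeas1 k).sub (hmeas2 k)).aestronglyMeasurable
  have hbL2 : MemLp (fun ω => θhat k ω - θstar k ω) 2 P :=
    (memLp_two_iff_integrable_sq_norm hbmeas).2 (hint k)
  have hW1 : MemLp (fun ω => Real.sqrt K * ‖θhat k ω - θstar k ω‖) 2 P :=
    hbL2.norm.const_mul _
  have hW2 : MemLp (fun ω => a k * ‖e k ω‖) 2 P := (heL2 k).norm.const_mul _
  have hWL2 : MemLp (fun ω =>
      Real.sqrt K * ‖θhat k ω - θstar k ω‖ + a k * ‖e k ω‖) 2 P := hW1.add hW2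
  have hYmeas : AEStronglyMeasurable (fun ω => θhat (k+1) ω - θstar k ω) P :=
    ((hmeas1 (k+1)).sub (hmeas2 k)).aestronglyMeasurable
  have hYL2 : MemLp (fun ω => θhat (k+1) ω - θstar k ω) 2 P := by
    apply hWL2.of_le hYmeas
    filter_upwards [hptwise] with ω hω
    refine hω.trans (le_abs_self _)
  have hZL2 := hdL2 k
  have hXYZ : (fun ω => θhat (k+1) ω - θstar (k+1) ω)
      = fun ω => (θhat (k+1) ω - θstar k ω) - (θstar (k+1) ω - θstar k ω) := by
    funext ω; abel
  have hXL2 : MemLp (fun ω => θhat (k+1) ω - θstar (k+1) ω) 2 P := by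
    rw [hXYZ]; exact hYL2.sub hZL2
  -- eLpNorm chain
  have step1 : eLpNorm (fun ω => θhat (k+1) ω - θstar (k+1) ω) 2 P
      ≤ eLpNorm (fun ω => θhat (k+1) ω - θstar k ω) 2 P
        + eLpNorm (fun ω => θstar (k+1) ω - θstar k ω) 2 P := by
    rw [hXYZ]
    exact eLpNorm_sub_le hYmeas hZL2.aestronglyMeasurable one_le_two
  have step2 : eLpNorm (fun ω => θhat (k+1) ω - θstar k ω) 2 P
      ≤ eLpNorm (fun ω =>
          Real.sqrt K * ‖θhat k ω - θstar k ω‖ + a k * ‖e k ω‖) 2 P := by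
    apply eLpNorm_mono_ae
    filter_upwards [hptwise] with ω hω
    exact hω.trans (le_abs_self _)
  have step3 : eLpNorm (fun ω =>
        Real.sqrt K * ‖θhat k ω - θstar k ω‖ + a k * ‖e k ω‖) 2 P
      ≤ eLpNorm (fun ω => Real.sqrt K * ‖θhat k ω - θstar k ω‖) 2 P
        + eLpNorm (fun ω => a k * ‖e k ω‖) 2 P :=
    eLpNorm_add_le hW1.aestronglyMeasurable hW2.aestronglyMeasurable one_le_two
  -- convert to real numbers
  have tX := toReal_eLpNorm_two hXL2
  have tY := toReal_eLpNorm_two hYL2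
  have tZ := toReal_eLpNorm_two hZL2
  have tW := toReal_eLpNorm_two hWL2
  have tW1 := toReal_eLpNorm_two hW1
  have tW2 := toReal_eLpNorm_two hW2
  have rstep1 : Real.sqrt (∫ ω, ‖θhat (k+1) ω - θstar (k+1) ω‖ ^ 2 ∂P)
      ≤ Real.sqrt (∫ ω, ‖θhat (k+1) ω - θstar k ω‖ ^ 2 ∂P)
        + Real.sqrt (∫ ω, ‖θstar (k+1) ω - θstar k ω‖ ^ 2 ∂P) := by
    rw [← tX, ← tY, ← tZ, ← ENNReal.toReal_add hYL2.eLpNorm_ne_top hZL2.eLpNorm_ne_top]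
    exact ENNReal.toReal_mono (ENNReal.add_ne_top.2
      ⟨hYL2.eLpNorm_ne_top, hZL2.eLpNorm_ne_top⟩) step1
  have rstep2 : Real.sqrt (∫ ω, ‖θhat (k+1) ω - θstar k ω‖ ^ 2 ∂P)
      ≤ Real.sqrt (∫ ω, ‖Real.sqrt K * ‖θhat k ω - θstar k ω‖‖ ^ 2 ∂P)
        + Real.sqrt (∫ ω, ‖a k * ‖e k ω‖‖ ^ 2 ∂P) := by
    rw [← tY, ← tW1, ← tW2, ← ENNReal.toReal_add hW1.eLpNorm_ne_top hW2.eLpNorm_ne_top]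
    exact ENNReal.toReal_mono (ENNReal.add_ne_top.2
      ⟨hW1.eLpNorm_ne_top, hW2.eLpNorm_ne_top⟩) (step2.trans step3)
  -- identify the two pieces
  have hEb0 : 0 ≤ ∫ ω, ‖θhat k ω - θstar k ω‖ ^ 2 ∂P :=
    integral_nonneg fun ω => by positivity
  have hI1 : (∫ ω, ‖Real.sqrt K * ‖θhat k ω - θstar k ω‖‖ ^ 2 ∂P)
      = K * ∫ ω, ‖θhat k ω - θstar k ω‖ ^ 2 ∂P := by
    rw [← integral_const_mul]
    congr 1; funext ω
    rw [norm_mul, norm_norm, Real.norm_eq_abs, abs_of_nonneg (Real.sqrt_nonneg _),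
      mul_pow, Real.sq_sqrt hK0]
  have hI2 : (∫ ω, ‖a k * ‖e k ω‖‖ ^ 2 ∂P) = a k ^ 2 * ∫ ω, ‖e k ω‖ ^ 2 ∂P := by
    rw [← integral_const_mul]
    congr 1; funext ω
    rw [norm_mul, norm_norm, Real.norm_eq_abs, abs_of_pos hak, mul_pow]
  have hbound1 : Real.sqrt (∫ ω, ‖Real.sqrt K * ‖θhat k ω - θstar k ω‖‖ ^ 2 ∂P)
      ≤ Real.sqrt (u k * ∫ ω, ‖θhat k ω - θstar k ω‖ ^ 2 ∂P) := by
    rw [hI1]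
    exact Real.sqrt_le_sqrt (mul_le_mul_of_nonneg_right hKu hEb0)
  have hbound2 : Real.sqrt (∫ ω, ‖a k * ‖e k ω‖‖ ^ 2 ∂P) ≤ M k * Real.sqrt (v k) := by
    rw [hI2]
    have he0 : 0 ≤ ∫ ω, ‖e k ω‖ ^ 2 ∂P := integral_nonneg fun ω => by positivity
    calc Real.sqrt (a k ^ 2 * ∫ ω, ‖e k ω‖ ^ 2 ∂P)
        = a k * Real.sqrt (∫ ω, ‖e k ω‖ ^ 2 ∂P) := by
          rw [Real.sqrt_mul (sq_nonneg _), Real.sqrt_sq hak.le]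
      _ ≤ Real.sqrt (v k) * M k := by
          apply mul_le_mul hav' _ (Real.sqrt_nonneg _) (Real.sqrt_nonneg _)
          calc Real.sqrt (∫ ω, ‖e k ω‖ ^ 2 ∂P) ≤ Real.sqrt (M k ^ 2) :=
                Real.sqrt_le_sqrt (heM k)
            _ = M k := Real.sqrt_sq (hM k)
      _ = M k * Real.sqrt (v k) := mul_comm _ _
  have hbound3 : Real.sqrt (∫ ω, ‖θstar (k+1) ω - θstar k ω‖ ^ 2 ∂P) ≤ B k := by
    calc Real.sqrt (∫ ω, ‖θstar (k+1) ω - θstar k ω‖ ^ 2 ∂P)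
        ≤ Real.sqrt (B k ^ 2) := Real.sqrt_le_sqrt (hdB k)
      _ = B k := Real.sqrt_sq (hB k)
  linarith [rstep1, rstep2, hbound1, hbound2, hbound3]
end

section
/- Let p ≥ 1. For i = 1, 2, let f_i : ℝ^p → ℝ be continuously differentiable with gradient g_i, 𝒞_i-strongly convex with g_i ℒ_i-Lipschitz, and let θ*_i satisfy g_i(θ*_i) = 0. Fix θ̂ ∈ ℝ^p and e_1, e_2 ∈ ℝ^p, and write Ĝ_i := g_i(θ̂) + e_i. Then ‖θ*_2 − θ*_1‖ ≤ (1/𝒞_2)(‖Ĝ_2‖ + ‖e_2‖) + (1/𝒞_1)(‖Ĝ_1‖ + ‖e_1‖), and ‖θ*_2 − θ*_1‖ ≥ max{ (1/ℒ_2)·|‖Ĝ_2‖ − ‖e_2‖| − (1/𝒞_1)(‖Ĝ_1‖ + ‖e_1‖), (1/ℒ_1)·|‖Ĝ_1‖ − ‖e_1‖| − (1/𝒞_2)(‖Ĝ_2‖ + ‖e_2‖) }. -/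
lemma drift_upper_aux {p : ℕ} (g : EuclideanSpace ℝ (Fin p) → EuclideanSpace ℝ (Fin p))
    (C : ℝ)
    (hsc : ∀ x y : EuclideanSpace ℝ (Fin p),
      C * ‖x - y‖ ^ 2 ≤ (inner ℝ (x - y) (g x - g y) : ℝ))
    (θs θh : EuclideanSpace ℝ (Fin p)) (hroot : g θs = 0) :
    C * ‖θh - θs‖ ≤ ‖g θh‖ := by
  have h := hsc θh θs
  rw [hroot, sub_zero] at h
  have h2 := real_inner_le_norm (θh - θs) (g θh)
  rcases eq_or_lt_of_le (norm_nonneg (θh - θs)) with h0 | h0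
  · rw [← h0]; simp [norm_nonneg]
  · nlinarith

lemma drift_lower_aux {p : ℕ} (g : EuclideanSpace ℝ (Fin p) → EuclideanSpace ℝ (Fin p))
    (L : ℝ)
    (hlip : ∀ x y : EuclideanSpace ℝ (Fin p), ‖g x - g y‖ ≤ L * ‖x - y‖)
    (θs θh : EuclideanSpace ℝ (Fin p)) (hroot : g θs = 0) :
    ‖g θh‖ ≤ L * ‖θh - θs‖ := by
  have h := hlip θh θs
  rwa [hroot, sub_zero] at h

lemma C_le_L {p : ℕ} (hp : 1 ≤ p) (g : EuclideanSpace ℝ (Fin p) → EuclideanSpace ℝ (Fin p))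
    (C L : ℝ)
    (hsc : ∀ x y : EuclideanSpace ℝ (Fin p),
      C * ‖x - y‖ ^ 2 ≤ (inner ℝ (x - y) (g x - g y) : ℝ))
    (hlip : ∀ x y : EuclideanSpace ℝ (Fin p), ‖g x - g y‖ ≤ L * ‖x - y‖) :
    C ≤ L := by
  set x : EuclideanSpace ℝ (Fin p) := EuclideanSpace.single ⟨0, hp⟩ 1 with hx
  have hxn : ‖x - 0‖ = 1 := by simp [hx]
  have h1 := hsc x 0
  have h2 := real_inner_le_norm (x - (0:EuclideanSpace ℝ (Fin p))) (g x - g 0)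
  have h3 := hlip x 0
  rw [hxn] at h1 h2 h3
  nlinarith

/-- Drift bounds from two noisy gradient observations at a common point `θ̂`:
with `Ĝᵢ = gᵢ θ̂ + eᵢ` for two strongly convex losses with Lipschitz gradients
and roots `θ*ᵢ`,
`‖θ*₂ − θ*₁‖ ≤ (1/𝒞₂)(‖Ĝ₂‖+‖e₂‖) + (1/𝒞₁)(‖Ĝ₁‖+‖e₁‖)` and
`‖θ*₂ − θ*₁‖ ≥ max{(1/ℒ₂)|‖Ĝ₂‖−‖e₂‖| − (1/𝒞₁)(‖Ĝ₁‖+‖e₁‖),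
(1/ℒ₁)|‖Ĝ₁‖−‖e₁‖| − (1/𝒞₂)(‖Ĝ₂‖+‖e₂‖)}`. -/
theorem stmt_5 {p : ℕ} (hp : 1 ≤ p)
    (f1 f2 : EuclideanSpace ℝ (Fin p) → ℝ)
    (g1 g2 : EuclideanSpace ℝ (Fin p) → EuclideanSpace ℝ (Fin p))
    (C1 C2 L1 L2 : ℝ) (hC1 : 0 < C1) (hC2 : 0 < C2)
    (hsmooth1 : ContDiff ℝ 1 f1) (hsmooth2 : ContDiff ℝ 1 f2)
    (hgrad1 : ∀ x, HasGradientAt f1 (g1 x) x)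
    (hgrad2 : ∀ x, HasGradientAt f2 (g2 x) x)
    (hsc1 : ∀ x y : EuclideanSpace ℝ (Fin p),
      C1 * ‖x - y‖ ^ 2 ≤ (inner ℝ (x - y) (g1 x - g1 y) : ℝ))
    (hsc2 : ∀ x y : EuclideanSpace ℝ (Fin p),
      C2 * ‖x - y‖ ^ 2 ≤ (inner ℝ (x - y) (g2 x - g2 y) : ℝ))
    (hlip1 : ∀ x y : EuclideanSpace ℝ (Fin p), ‖g1 x - g1 y‖ ≤ L1 * ‖x - y‖)
    (hlip2 : ∀ x y : EuclideanSpace ℝ (Fin p), ‖g2 x - g2 y‖ ≤ L2 * ‖x - y‖)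
    (θstar1 θstar2 : EuclideanSpace ℝ (Fin p))
    (hroot1 : g1 θstar1 = 0) (hroot2 : g2 θstar2 = 0)
    (θhat e1 e2 : EuclideanSpace ℝ (Fin p)) :
    ‖θstar2 - θstar1‖ ≤
        1 / C2 * (‖g2 θhat + e2‖ + ‖e2‖) + 1 / C1 * (‖g1 θhat + e1‖ + ‖e1‖) ∧
      max (1 / L2 * |‖g2 θhat + e2‖ - ‖e2‖| - 1 / C1 * (‖g1 θhat + e1‖ + ‖e1‖))
          (1 / L1 * |‖g1 θhat + e1‖ - ‖e1‖| - 1 / C2 * (‖g2 θhat + e2‖ + ‖e2‖)) ≤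
        ‖θstar2 - θstar1‖ := by
  have hL1 : 0 < L1 := lt_of_lt_of_le hC1 (C_le_L hp g1 C1 L1 hsc1 hlip1)
  have hL2 : 0 < L2 := lt_of_lt_of_le hC2 (C_le_L hp g2 C2 L2 hsc2 hlip2)
  -- norm comparisons for g θhat
  have hn1 : ‖g1 θhat‖ ≤ ‖g1 θhat + e1‖ + ‖e1‖ := by
    have h : ‖g1 θhat‖ = ‖(g1 θhat + e1) - e1‖ := by rw [add_sub_cancel_right]
    rw [h]; exact norm_sub_le _ _
  have hn2 : ‖g2 θhat‖ ≤ ‖g2 θhat + e2‖ + ‖e2‖ := by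
    have h : ‖g2 θhat‖ = ‖(g2 θhat + e2) - e2‖ := by rw [add_sub_cancel_right]
    rw [h]; exact norm_sub_le _ _
  have ha1 : |‖g1 θhat + e1‖ - ‖e1‖| ≤ ‖g1 θhat‖ := by
    have h := abs_norm_sub_norm_le (g1 θhat + e1) e1
    simpa using h
  have ha2 : |‖g2 θhat + e2‖ - ‖e2‖| ≤ ‖g2 θhat‖ := by
    have h := abs_norm_sub_norm_le (g2 θhat + e2) e2
    simpa using h
  -- distance bounds via strong convexity and Lipschitz
  have hu1 := drift_upper_aux g1 C1 hsc1 θstar1 θhat hroot1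
  have hu2 := drift_upper_aux g2 C2 hsc2 θstar2 θhat hroot2
  have hl1 := drift_lower_aux g1 L1 hlip1 θstar1 θhat hroot1
  have hl2 := drift_lower_aux g2 L2 hlip2 θstar2 θhat hroot2
  have hd1 : ‖θhat - θstar1‖ ≤ 1 / C1 * (‖g1 θhat + e1‖ + ‖e1‖) := by
    rw [one_div_mul_eq_div, le_div_iff₀ hC1]; nlinarith
  have hd2 : ‖θhat - θstar2‖ ≤ 1 / C2 * (‖g2 θhat + e2‖ + ‖e2‖) := by
    rw [one_div_mul_eq_div, le_div_iff₀ hC2]; nlinarith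
  have he1 : 1 / L1 * |‖g1 θhat + e1‖ - ‖e1‖| ≤ ‖θhat - θstar1‖ := by
    rw [one_div_mul_eq_div, div_le_iff₀ hL1]; nlinarith
  have he2 : 1 / L2 * |‖g2 θhat + e2‖ - ‖e2‖| ≤ ‖θhat - θstar2‖ := by
    rw [one_div_mul_eq_div, div_le_iff₀ hL2]; nlinarith
  -- triangle inequalities
  have htr1 : ‖θstar2 - θstar1‖ ≤ ‖θhat - θstar2‖ + ‖θhat - θstar1‖ := by
    have h : θstar2 - θstar1 = (θstar2 - θhat) + (θhat - θstar1) := by abel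
    rw [h]
    calc ‖(θstar2 - θhat) + (θhat - θstar1)‖ ≤ ‖θstar2 - θhat‖ + ‖θhat - θstar1‖ :=
          norm_add_le _ _
      _ = ‖θhat - θstar2‖ + ‖θhat - θstar1‖ := by rw [norm_sub_rev]
  have htr2 : ‖θhat - θstar2‖ ≤ ‖θhat - θstar1‖ + ‖θstar2 - θstar1‖ := by
    have h : θhat - θstar2 = (θhat - θstar1) + (θstar1 - θstar2) := by abel
    rw [h]
    calc ‖(θhat - θstar1) + (θstar1 - θstar2)‖ ≤ ‖θhat - θstar1‖ + ‖θstar1 - θstar2‖ :=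
          norm_add_le _ _
      _ = ‖θhat - θstar1‖ + ‖θstar2 - θstar1‖ := by rw [norm_sub_rev θstar1 θstar2]
  have htr3 : ‖θhat - θstar1‖ ≤ ‖θhat - θstar2‖ + ‖θstar2 - θstar1‖ := by
    have h : θhat - θstar1 = (θhat - θstar2) + (θstar2 - θstar1) := by abel
    rw [h]
    exact norm_add_le _ _
  refine ⟨by linarith, max_le (by linarith) (by linarith)⟩
end

section
/- Let p ≥ 1, let H be a symmetric real p×p matrix, V a real p×p matrix, a ∈ ℝ, and θ_0 ∈ ℝ^p. On a probability space, let (ξ_j)_{j∈ℕ} be mutually independent random vectors in ℝ^p whose components are square-integrable, each with mean zero (E ξ_j = 0) and common covariance E[ξ_j(s)·ξ_j(t)] = V_{st} for all coordinates s, t. Define θ̂_0 = θ_0 and θ̂_{j+1} = (I − aH)θ̂_j − a·ξ_j, and set Ĝ_j := H θ̂_j + ξ_j. Then for every k ≥ 1, E⟨Ĝ_k, Ĝ_{k−1}⟩ = θ_0ᵀ(I − aH)^k H² (I − aH)^{k−1} θ_0 − a·tr(H V) + a²·∑_{i=0}^{k−2} tr((I − aH)^{2i+1} H² V), where the sum is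 empty when k = 1. -/
open Matrix MeasureTheory ProbabilityTheory


variable {Ω : Type} [MeasurableSpace Ω] {P : Measure Ω} [IsProbabilityMeasure P]

omit [IsProbabilityMeasure P] in
lemma intmul2 {f g : Ω → ℝ} (hf : MemLp f 2 P) (hg : MemLp g 2 P) :
    Integrable (fun ω => f ω * g ω) P := by
  have h := hf.smul (φ := g) hg (r := 1)
    (hpqr := ⟨by simp [ENNReal.inv_two_add_inv_two]⟩)
  exact (memLp_one_iff_integrable.mp h).congr
    (Filter.Eventually.of_forall fun ω => mul_comm (g ω) (f ω))

omit [IsProbabilityMeasure P] in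
lemma mom {p : ℕ} {V : Matrix (Fin p) (Fin p) ℝ} {ξ : ℕ → Ω → Fin p → ℝ}
    (hindep : iIndepFun ξ P)
    (hL2 : ∀ j s, MemLp (fun ω => ξ j ω s) 2 P)
    (hmean : ∀ j s, (∫ ω, ξ j ω s ∂P) = 0)
    (hcov : ∀ j s t, (∫ ω, ξ j ω s * ξ j ω t ∂P) = V s t)
    (i j : ℕ) (t u : Fin p) :
    (∫ ω, ξ i ω t * ξ j ω u ∂P) = if i = j then V t u else 0 := by
  by_cases hij : i = j
  · subst hij; simp [hcov]
  · have hind : IndepFun (fun ω => ξ i ω t) (fun ω => ξ j ω u) P :=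
      (hindep.indepFun hij).comp (measurable_pi_apply t) (measurable_pi_apply u)
    have h2 := hind.integral_mul_eq_mul_integral ((hL2 i t).aestronglyMeasurable) ((hL2 j u).aestronglyMeasurable)
    rw [show (∫ ω, ξ i ω t * ξ j ω u ∂P)
        = integral P ((fun ω => ξ i ω t) * fun ω => ξ j ω u) from rfl, h2, hmean, hmean]
    simp [hij]

lemma aux_main {p : ℕ} {V : Matrix (Fin p) (Fin p) ℝ} {ξ : ℕ → Ω → Fin p → ℝ}
    (hindep : iIndepFun ξ P)
    (hL2 : ∀ j s, MemLp (fun ω => ξ j ω s) 2 P)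
    (hmean : ∀ j s, (∫ ω, ξ j ω s ∂P) = 0)
    (hcov : ∀ j s t, (∫ ω, ξ j ω s * ξ j ω t ∂P) = V s t)
    (n : ℕ) (c d : ℝ) (α β : ℕ → Fin p → ℝ) :
    (∫ ω, (c + ∑ i ∈ Finset.range (n+1), ∑ t, α i t * ξ i ω t) *
       (d + ∑ j ∈ Finset.range n, ∑ u, β j u * ξ j ω u) ∂P)
    = c*d + ∑ i ∈ Finset.range n, ∑ t, ∑ u, α i t * β i u * V t u := by
  set X : Ω → ℝ := fun ω => ∑ i ∈ Finset.range (n+1), ∑ t, α i t * ξ i ω t with hX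
  set Y : Ω → ℝ := fun ω => ∑ j ∈ Finset.range n, ∑ u, β j u * ξ j ω u with hYdef
  have hXi : ∀ i t, Integrable (fun ω => ξ i ω t) P := fun i t => (hL2 i t).integrable one_le_two
  have hXL2 : MemLp X 2 P :=
    memLp_finset_sum _ fun i _ => memLp_finset_sum _ fun t _ => (hL2 i t).const_mul _
  have hYL2 : MemLp Y 2 P :=
    memLp_finset_sum _ fun j _ => memLp_finset_sum _ fun u _ => (hL2 j u).const_mul _
  have hXint : Integrable X P := hXL2.integrable one_le_two
  have hYint : Integrable Y P := hYL2.integrable one_le_two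
  have hXYint : Integrable (fun ω => X ω * Y ω) P := intmul2 hXL2 hYL2
  have hX0 : (∫ ω, X ω ∂P) = 0 := by
    rw [hX, integral_finset_sum _ fun i _ =>
      integrable_finset_sum _ fun t _ => (hXi i t).const_mul _]
    refine Finset.sum_eq_zero fun i _ => ?_
    rw [integral_finset_sum _ fun t _ => (hXi i t).const_mul _]
    exact Finset.sum_eq_zero fun t _ => by rw [integral_const_mul, hmean, mul_zero]
  have hY0 : (∫ ω, Y ω ∂P) = 0 := by
    rw [hYdef, integral_finset_sum _ fun j _ =>
      integrable_finset_sum _ fun u _ => (hXi j u).const_mul _]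
    refine Finset.sum_eq_zero fun j _ => ?_
    rw [integral_finset_sum _ fun u _ => (hXi j u).const_mul _]
    exact Finset.sum_eq_zero fun u _ => by rw [integral_const_mul, hmean, mul_zero]
  have hinner : ∀ i t, (∫ ω, ξ i ω t * Y ω ∂P)
      = ∑ j ∈ Finset.range n, ∑ u, β j u * (if i = j then V t u else 0) := by
    intro i t
    have heq : (fun ω => ξ i ω t * Y ω)
        = fun ω => ∑ j ∈ Finset.range n, ∑ u, β j u * (ξ i ω t * ξ j ω u) := by
      funext ω
      rw [hYdef]
      simp only [Finset.mul_sum]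
      exact Finset.sum_congr rfl fun j _ => Finset.sum_congr rfl fun u _ => by ring
    rw [heq, integral_finset_sum _ fun j _ => integrable_finset_sum _ fun u _ =>
      (intmul2 (hL2 i t) (hL2 j u)).const_mul _]
    refine Finset.sum_congr rfl fun j _ => ?_
    rw [integral_finset_sum _ fun u _ => (intmul2 (hL2 i t) (hL2 j u)).const_mul _]
    exact Finset.sum_congr rfl fun u _ => by
      rw [integral_const_mul, mom hindep hL2 hmean hcov]
  have hXY0 : (∫ ω, X ω * Y ω ∂P)
      = ∑ i ∈ Finset.range n, ∑ t, ∑ u, α i t * β i u * V t u := by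
    have heq : (fun ω => X ω * Y ω)
        = fun ω => ∑ i ∈ Finset.range (n+1), ∑ t, α i t * (ξ i ω t * Y ω) := by
      funext ω
      rw [hX]
      simp only [Finset.sum_mul]
      exact Finset.sum_congr rfl fun i _ => Finset.sum_congr rfl fun t _ => by ring
    have hterm : ∀ i, (∫ ω, ∑ t, α i t * (ξ i ω t * Y ω) ∂P)
        = ∑ t, α i t * ∑ j ∈ Finset.range n, ∑ u, β j u * (if i = j then V t u else 0) := by
      intro i
      rw [integral_finset_sum _ fun t _ => (intmul2 (hL2 i t) hYL2).const_mul _]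
      exact Finset.sum_congr rfl fun t _ => by rw [integral_const_mul, hinner]
    calc (∫ ω, X ω * Y ω ∂P)
        = ∑ i ∈ Finset.range (n+1), ∫ ω, ∑ t, α i t * (ξ i ω t * Y ω) ∂P := by
          rw [heq, integral_finset_sum _ fun i _ => integrable_finset_sum _ fun t _ =>
            (intmul2 (hL2 i t) hYL2).const_mul _]
      _ = ∑ i ∈ Finset.range (n+1), ∑ t, α i t *
            ∑ j ∈ Finset.range n, ∑ u, β j u * (if i = j then V t u else 0) :=
          Finset.sum_congr rfl fun i _ => hterm i
      _ = ∑ i ∈ Finset.range n, ∑ t, ∑ u, α i t * β i u * V t u := by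
          rw [Finset.sum_range_succ]
          have hlast : (∑ t, α n t *
              ∑ j ∈ Finset.range n, ∑ u, β j u * (if n = j then V t u else 0)) = 0 := by
            refine Finset.sum_eq_zero fun t _ => ?_
            have h0 : (∑ j ∈ Finset.range n, ∑ u, β j u * (if n = j then V t u else 0)) = 0 := by
              refine Finset.sum_eq_zero fun j hj => Finset.sum_eq_zero fun u _ => ?_
              have hne : n ≠ j := by have := Finset.mem_range.mp hj; omega
              simp [hne]
            rw [h0, mul_zero]
          rw [hlast, add_zero]
          refine Finset.sum_congr rfl fun i hi => ?_
          have hdiag : ∀ t : Fin p,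
              (∑ j ∈ Finset.range n, ∑ u, β j u * (if i = j then V t u else 0))
              = ∑ u, β i u * V t u := by
            intro t
            rw [Finset.sum_eq_single i]
            · simp
            · intro j _ hne
              exact Finset.sum_eq_zero fun u _ => by simp [(Ne.symm hne : i ≠ j)]
            · intro h; exact absurd hi h
          refine Finset.sum_congr rfl fun t _ => ?_
          rw [hdiag, Finset.mul_sum]
          exact Finset.sum_congr rfl fun u _ => by ring
  have h34 : Integrable (fun ω => d * X ω + X ω * Y ω) P := by
    exact (hXint.const_mul d).add hXYint
  have h234 : Integrable (fun ω => c * Y ω + (d * X ω + X ω * Y ω)) P := by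
    exact (hYint.const_mul c).add h34
  have hexp : (fun ω => (c + X ω) * (d + Y ω))
      = fun ω => c*d + (c * Y ω + (d * X ω + X ω * Y ω)) := by funext ω; ring
  calc (∫ ω, (c + X ω) * (d + Y ω) ∂P)
      = ∫ ω, c*d + (c * Y ω + (d * X ω + X ω * Y ω)) ∂P := by rw [hexp]
    _ = c*d + ∑ i ∈ Finset.range n, ∑ t, ∑ u, α i t * β i u * V t u := by
        rw [integral_add (integrable_const _) h234,
          integral_add (hYint.const_mul c) h34,
          integral_add (hXint.const_mul d) hXYint,
          integral_const, integral_const_mul, integral_const_mul, hX0, hY0, hXY0]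
        simp

-- matrix triple-sum = trace lemma
lemma tr_form {p : ℕ} (M N W : Matrix (Fin p) (Fin p) ℝ) (hW : ∀ t u, W t u = W u t) :
    ∑ s, ∑ t, ∑ u, M s t * N s u * W t u = (Mᵀ * N * W).trace := by
  simp only [Matrix.trace, Matrix.diag_apply, Matrix.mul_apply, Matrix.transpose_apply,
    Finset.sum_mul]
  rw [Finset.sum_comm]
  refine Finset.sum_congr rfl fun t _ => ?_
  rw [Finset.sum_comm]
  exact Finset.sum_congr rfl fun u _ => Finset.sum_congr rfl fun s _ => by rw [hW t u]

lemma dot_mulVec_mulVec {p : ℕ} (M N : Matrix (Fin p) (Fin p) ℝ) (x y : Fin p → ℝ) :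
    (M *ᵥ x) ⬝ᵥ (N *ᵥ y) = x ⬝ᵥ (Mᵀ * N) *ᵥ y := by
  rw [Matrix.dotProduct_mulVec x, ← Matrix.vecMul_vecMul, Matrix.vecMul_transpose,
    ← Matrix.dotProduct_mulVec]

/-- Expected inner product of successive noisy gradients for constant-gain SGD on a
quadratic loss: with `θ̂_{j+1} = (I−aH)θ̂_j − aξ_j`, `Ĝ_j = Hθ̂_j + ξ_j`, and
independent mean-zero noise of covariance `V`, for `k ≥ 1`,
`E⟨Ĝ_k, Ĝ_{k−1}⟩ = θ₀ᵀ(I−aH)^k H² (I−aH)^{k−1} θ₀ − a·tr(HV)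
+ a²∑_{i=0}^{k−2} tr((I−aH)^{2i+1}H²V)`. -/
theorem stmt_7 {p : ℕ} (hp : 1 ≤ p)
    {Ω : Type} [MeasurableSpace Ω] (P : Measure Ω) [IsProbabilityMeasure P]
    (H V : Matrix (Fin p) (Fin p) ℝ) (hH : H.IsSymm)
    (a : ℝ) (θ0 : Fin p → ℝ)
    (ξ : ℕ → Ω → Fin p → ℝ)
    (hmeas : ∀ j, Measurable (ξ j))
    (hindep : iIndepFun ξ P)
    (hL2 : ∀ j s, MemLp (fun ω => ξ j ω s) 2 P)
    (hmean : ∀ j s, (∫ ω, ξ j ω s ∂P) = 0)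
    (hcov : ∀ j s t, (∫ ω, ξ j ω s * ξ j ω t ∂P) = V s t)
    (θhat : ℕ → Ω → Fin p → ℝ)
    (hθ0 : ∀ ω, θhat 0 ω = θ0)
    (hrec : ∀ j ω, θhat (j + 1) ω = (1 - a • H) *ᵥ θhat j ω - a • ξ j ω)
    (G : ℕ → Ω → Fin p → ℝ)
    (hG : ∀ j ω, G j ω = H *ᵥ θhat j ω + ξ j ω) :
    ∀ k : ℕ, 1 ≤ k →
      (∫ ω, G k ω ⬝ᵥ G (k - 1) ω ∂P) =
        θ0 ⬝ᵥ ((1 - a • H) ^ k * H ^ 2 * (1 - a • H) ^ (k - 1)) *ᵥ θ0 -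
            a * (H * V).trace +
          a ^ 2 * ∑ i ∈ Finset.range (k - 1),
            ((1 - a • H) ^ (2 * i + 1) * H ^ 2 * V).trace := by
  intro k hk
  set B : Matrix (Fin p) (Fin p) ℝ := 1 - a • H with hB
  -- coefficient matrices
  set A : ℕ → ℕ → Matrix (Fin p) (Fin p) ℝ :=
    fun j i => if i = j then 1 else (-a) • (H * B ^ (j - 1 - i)) with hA
  have hsum : ∀ (M : Matrix (Fin p) (Fin p) ℝ) (s : Finset ℕ) (v : ℕ → Fin p → ℝ),
      M *ᵥ (∑ i ∈ s, v i) = ∑ i ∈ s, M *ᵥ v i := by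
    intro M s v
    classical
    induction s using Finset.induction with
    | empty => simp
    | insert _ _ hnot ih =>
      rw [Finset.sum_insert hnot, Finset.sum_insert hnot, Matrix.mulVec_add, ih]
  -- closed form for θhat
  have hθ : ∀ j ω, θhat j ω
      = B ^ j *ᵥ θ0 + ∑ i ∈ Finset.range j, ((-a) • B ^ (j - 1 - i)) *ᵥ ξ i ω := by
    intro j
    induction j with
    | zero => intro ω; simp [hθ0]
    | succ j ih =>
      intro ω
      rw [hrec j ω, ih ω, Matrix.mulVec_add, Matrix.mulVec_mulVec, ← pow_succ', hsum]
      rw [Finset.sum_range_succ]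
      have hterm : ∀ i ∈ Finset.range j,
          B *ᵥ (((-a) • B ^ (j - 1 - i)) *ᵥ ξ i ω) = ((-a) • B ^ (j + 1 - 1 - i)) *ᵥ ξ i ω := by
        intro i hi
        have hie : j + 1 - 1 - i = (j - 1 - i) + 1 := by
          have := Finset.mem_range.mp hi; omega
        rw [Matrix.mulVec_mulVec, hie, Matrix.mul_smul, ← pow_succ']
      rw [Finset.sum_congr rfl hterm]
      have hlast : ((-a) • B ^ (j + 1 - 1 - j)) *ᵥ ξ j ω = -(a • ξ j ω) := by
        have : j + 1 - 1 - j = 0 := by omega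
        rw [this, pow_zero, Matrix.smul_mulVec, Matrix.one_mulVec, neg_smul]
      rw [hlast]
      abel
  -- closed form for G
  have hGf : ∀ j ω, G j ω
      = (H * B ^ j) *ᵥ θ0 + ∑ i ∈ Finset.range (j + 1), (A j i) *ᵥ ξ i ω := by
    intro j ω
    rw [hG j ω, hθ j ω, Matrix.mulVec_add, Matrix.mulVec_mulVec]
    have hsumH : H *ᵥ (∑ i ∈ Finset.range j, ((-a) • B ^ (j - 1 - i)) *ᵥ ξ i ω)
        = ∑ i ∈ Finset.range j, ((-a) • (H * B ^ (j - 1 - i))) *ᵥ ξ i ω := by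
      rw [hsum]
      exact Finset.sum_congr rfl fun i _ => by
        rw [Matrix.mulVec_mulVec, Matrix.mul_smul]
    rw [hsumH, Finset.sum_range_succ]
    have h1 : A j j = 1 := by simp [hA]
    have h2 : ∀ i ∈ Finset.range j, ((-a) • (H * B ^ (j - 1 - i))) *ᵥ ξ i ω
        = (A j i) *ᵥ ξ i ω := by
      intro i hi
      have : i ≠ j := by have := Finset.mem_range.mp hi; omega
      simp [hA, this]
    rw [Finset.sum_congr rfl h2, h1, Matrix.one_mulVec]
    abel
  -- componentwise closed form
  have hGcomp : ∀ j ω s, G j ω s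
      = ((H * B ^ j) *ᵥ θ0) s + ∑ i ∈ Finset.range (j + 1), ∑ t, (A j i) s t * ξ i ω t := by
    intro j ω s
    rw [hGf j ω]
    simp [Matrix.mulVec, dotProduct, Finset.sum_apply]
  -- L2 bounds for coordinates of G
  have hGL2 : ∀ j s, MemLp (fun ω => G j ω s) 2 P := by
    intro j s
    have heq : (fun ω => G j ω s) = fun ω =>
        ((H * B ^ j) *ᵥ θ0) s + ∑ i ∈ Finset.range (j + 1), ∑ t, (A j i) s t * ξ i ω t :=
      funext fun ω => hGcomp j ω s
    rw [heq]
    exact MemLp.add (f := fun _ => ((H * B ^ j) *ᵥ θ0) s)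
      (g := fun ω => ∑ i ∈ Finset.range (j + 1), ∑ t, (A j i) s t * ξ i ω t)
      (memLp_const _) (memLp_finset_sum _ fun i _ =>
      memLp_finset_sum _ fun t _ => (hL2 i t).const_mul _)
  -- split the integral of the dot product over coordinates
  have hsplit : (∫ ω, G k ω ⬝ᵥ G (k - 1) ω ∂P)
      = ∑ s, ∫ ω, G k ω s * G (k - 1) ω s ∂P := by
    rw [show (fun ω => G k ω ⬝ᵥ G (k - 1) ω)
        = fun ω => ∑ s, G k ω s * G (k - 1) ω s from rfl]
    exact integral_finset_sum _ fun s _ => intmul2 (hGL2 k s) (hGL2 (k - 1) s)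
  -- per-coordinate integral via aux_main
  have hks : k - 1 + 1 = k := by omega
  have hper : ∀ s, (∫ ω, G k ω s * G (k - 1) ω s ∂P)
      = ((H * B ^ k) *ᵥ θ0) s * ((H * B ^ (k - 1)) *ᵥ θ0) s
        + ∑ i ∈ Finset.range k, ∑ t, ∑ u, (A k i) s t * (A (k - 1) i) s u * V t u := by
    intro s
    have heq : (fun ω => G k ω s * G (k - 1) ω s) = fun ω =>
        (((H * B ^ k) *ᵥ θ0) s + ∑ i ∈ Finset.range ((k - 1) + 1 + 1),
            ∑ t, (A k i) s t * ξ i ω t) *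
        (((H * B ^ (k - 1)) *ᵥ θ0) s + ∑ i ∈ Finset.range ((k - 1) + 1),
            ∑ u, (A (k - 1) i) s u * ξ i ω u) := by
      funext ω
      rw [hGcomp k ω s, hGcomp (k - 1) ω s, hks]
    rw [heq, aux_main hindep hL2 hmean hcov ((k - 1) + 1)
      (((H * B ^ k) *ᵥ θ0) s) (((H * B ^ (k - 1)) *ᵥ θ0) s)
      (fun i t => (A k i) s t) (fun i u => (A (k - 1) i) s u), hks]
  rw [hsplit, Finset.sum_congr rfl fun s _ => hper s, Finset.sum_add_distrib]
  -- the deterministic term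
  have hdet : (∑ s, ((H * B ^ k) *ᵥ θ0) s * ((H * B ^ (k - 1)) *ᵥ θ0) s)
      = θ0 ⬝ᵥ (B ^ k * H ^ 2 * B ^ (k - 1)) *ᵥ θ0 := by
    have h1 : (∑ s, ((H * B ^ k) *ᵥ θ0) s * ((H * B ^ (k - 1)) *ᵥ θ0) s)
        = ((H * B ^ k) *ᵥ θ0) ⬝ᵥ ((H * B ^ (k - 1)) *ᵥ θ0) := rfl
    rw [h1, dot_mulVec_mulVec]
    have hBt : Bᵀ = B := by
      rw [hB, Matrix.transpose_sub, Matrix.transpose_one, Matrix.transpose_smul, hH.eq]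
    have hM : (H * B ^ k)ᵀ * (H * B ^ (k - 1)) = B ^ k * H ^ 2 * B ^ (k - 1) := by
      rw [Matrix.transpose_mul, Matrix.transpose_pow, hBt, hH.eq]
      calc B ^ k * H * (H * B ^ (k - 1)) = B ^ k * (H * H) * B ^ (k - 1) := by
            rw [← mul_assoc, ← mul_assoc]
        _ = B ^ k * H ^ 2 * B ^ (k - 1) := by rw [← sq]
    rw [hM]
  -- the noise term
  have hVsymm : ∀ t u, V t u = V u t := by
    intro t u
    rw [← hcov 0 t u, ← hcov 0 u t]
    simp [mul_comm]
  have hBt : Bᵀ = B := by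
    rw [hB, Matrix.transpose_sub, Matrix.transpose_one, Matrix.transpose_smul, hH.eq]
  have hcomm : Commute B H := by
    rw [hB]
    exact (Commute.one_left H).sub_left ((Commute.refl H).smul_left a)
  have hnoise : (∑ s, ∑ i ∈ Finset.range k, ∑ t, ∑ u,
        (A k i) s t * (A (k - 1) i) s u * V t u)
      = -(a * (H * V).trace)
        + a ^ 2 * ∑ i ∈ Finset.range (k - 1), (B ^ (2 * i + 1) * H ^ 2 * V).trace := by
    rw [Finset.sum_comm]
    have htr : ∀ i, (∑ s, ∑ t, ∑ u, (A k i) s t * (A (k - 1) i) s u * V t u)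
        = ((A k i)ᵀ * (A (k - 1) i) * V).trace := fun i => tr_form _ _ _ hVsymm
    rw [Finset.sum_congr rfl fun i _ => htr i]
    rw [show Finset.range k = Finset.range ((k - 1) + 1) from by rw [hks],
      Finset.sum_range_succ]
    -- last index i = k - 1
    have hlast : ((A k (k - 1))ᵀ * (A (k - 1) (k - 1)) * V).trace = -(a * (H * V).trace) := by
      have h1 : A k (k - 1) = (-a) • H := by
        have hne : k - 1 ≠ k := by omega
        have he : k - 1 - (k - 1) = 0 := by omega
        simp [hA, hne, he]
      have h2 : A (k - 1) (k - 1) = 1 := by simp [hA]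
      rw [h1, h2, mul_one, Matrix.transpose_smul, hH.eq, Matrix.smul_mul, Matrix.trace_smul]
      simp
    rw [hlast]
    -- earlier indices
    have hearly : ∀ i ∈ Finset.range (k - 1),
        ((A k i)ᵀ * (A (k - 1) i) * V).trace
        = a ^ 2 * (B ^ (2 * (k - 2 - i) + 1) * H ^ 2 * V).trace := by
      intro i hi
      have hik : i < k - 1 := Finset.mem_range.mp hi
      have hne1 : i ≠ k := by omega
      have hne2 : i ≠ k - 1 := by omega
      have he2 : k - 1 - 1 - i = k - 2 - i := by omega
      have h1 : A k i = (-a) • (H * B ^ (k - 1 - i)) := by simp [hA, hne1]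
      have h2 : A (k - 1) i = (-a) • (H * B ^ (k - 2 - i)) := by simp [hA, hne2, he2]
      rw [h1, h2, Matrix.transpose_smul, Matrix.transpose_mul, Matrix.transpose_pow, hBt, hH.eq]
      rw [Matrix.smul_mul, Matrix.mul_smul, Matrix.smul_mul, Matrix.smul_mul,
        Matrix.trace_smul, Matrix.trace_smul]
      have hmat : B ^ (k - 1 - i) * H * (H * B ^ (k - 2 - i)) * V
          = B ^ (2 * (k - 2 - i) + 1) * H ^ 2 * V := by
        have hcc : Commute (H ^ 2) (B ^ (k - 2 - i)) := (hcomm.symm).pow_pow 2 _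
        have hee : (k - 1 - i) + (k - 2 - i) = 2 * (k - 2 - i) + 1 := by omega
        calc B ^ (k - 1 - i) * H * (H * B ^ (k - 2 - i)) * V
            = B ^ (k - 1 - i) * (H ^ 2 * B ^ (k - 2 - i)) * V := by
              rw [sq]; noncomm_ring
          _ = B ^ (k - 1 - i) * (B ^ (k - 2 - i) * H ^ 2) * V := by rw [hcc.eq]
          _ = B ^ ((k - 1 - i) + (k - 2 - i)) * H ^ 2 * V := by
              rw [pow_add]; noncomm_ring
          _ = B ^ (2 * (k - 2 - i) + 1) * H ^ 2 * V := by rw [hee]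
      rw [hmat, smul_eq_mul, smul_eq_mul]
      ring
    rw [Finset.sum_congr rfl hearly]
    have hreflect : (∑ i ∈ Finset.range (k - 1),
          a ^ 2 * (B ^ (2 * (k - 2 - i) + 1) * H ^ 2 * V).trace)
        = ∑ i ∈ Finset.range (k - 1), a ^ 2 * (B ^ (2 * i + 1) * H ^ 2 * V).trace := by
      have h1 : ∀ i ∈ Finset.range (k - 1),
          a ^ 2 * (B ^ (2 * (k - 2 - i) + 1) * H ^ 2 * V).trace
          = a ^ 2 * (B ^ (2 * ((k - 1) - 1 - i) + 1) * H ^ 2 * V).trace := by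
        intro i hi
        have h2 : k - 2 - i = (k - 1) - 1 - i := by omega
        rw [h2]
      rw [Finset.sum_congr rfl h1]
      exact Finset.sum_range_reflect (fun i => a ^ 2 * (B ^ (2 * i + 1) * H ^ 2 * V).trace) _
    rw [hreflect, Finset.mul_sum]
    ring
  rw [hdet, hnoise]
  ring
end

section
/- Let p ≥ 1. Let P be a p×p permutation matrix, Q a p×p orthogonal matrix, L a real p×p invertible matrix with ‖Lᵀx‖ ≤ σ̄‖x‖ for all x ∈ ℝ^p (σ̄ > 0), and Λ = diag(λ_1, …, λ_p). Set H̄ := Pᵀ L Q Λ Qᵀ Lᵀ P. Suppose λ* > 0 satisfies xᵀ H̄ x ≥ (λ*/2)‖x‖² for all x, and let τ be a real with 0 < τ ≤ λ*/(2σ̄²). Then λ_j ≥ τ for every j = 1, …, p; consequently the eigenvalue-modified diagonal matrix with entries max{τ, |λ_j|} equals Λ, i.e., the preconditioning step leaves H̄ unchanged. -/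
open Matrix

/-- The Euclidean norm of a vector `x : Fin p → ℝ`. -/
noncomputable def euclNorm {p : ℕ} (x : Fin p → ℝ) : ℝ := Real.sqrt (∑ i, x i ^ 2)

/-- `M` is a permutation matrix: some permutation `σ` with `M i j = 1` iff `i = σ j`. -/
def IsPermutationMatrix {p : ℕ} (M : Matrix (Fin p) (Fin p) ℝ) : Prop :=
  ∃ σ : Equiv.Perm (Fin p), ∀ i j, M i j = if i = σ j then 1 else 0

lemma euclNorm_nonneg {p : ℕ} (x : Fin p → ℝ) : 0 ≤ euclNorm x := Real.sqrt_nonneg _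

lemma sq_euclNorm {p : ℕ} (x : Fin p → ℝ) : euclNorm x ^ 2 = x ⬝ᵥ x := by
  rw [euclNorm, Real.sq_sqrt (Finset.sum_nonneg fun i _ => sq_nonneg _)]
  simp [dotProduct, sq]

lemma euclNorm_congr {p : ℕ} (a b : Fin p → ℝ) (h : a ⬝ᵥ a = b ⬝ᵥ b) :
    euclNorm a = euclNorm b := by
  rw [euclNorm, euclNorm]
  congr 1
  have ha : (∑ i, a i ^ 2) = a ⬝ᵥ a := by simp [dotProduct, sq]
  have hb : (∑ i, b i ^ 2) = b ⬝ᵥ b := by simp [dotProduct, sq]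
  rw [ha, hb, h]

lemma dot_orth {p : ℕ} (A : Matrix (Fin p) (Fin p) ℝ) (h : Aᵀ * A = 1) (x : Fin p → ℝ) :
    (A *ᵥ x) ⬝ᵥ (A *ᵥ x) = x ⬝ᵥ x := by
  rw [Matrix.dotProduct_mulVec, ← Matrix.mulVec_transpose, Matrix.mulVec_mulVec, h]
  simp

lemma perm_orth {p : ℕ} (M : Matrix (Fin p) (Fin p) ℝ)
    (h : ∃ σ : Equiv.Perm (Fin p), ∀ i j, M i j = if i = σ j then 1 else 0) :
    M * Mᵀ = 1 := by
  obtain ⟨σ, hσ⟩ := h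
  ext i k
  simp only [Matrix.mul_apply, Matrix.transpose_apply, hσ, Matrix.one_apply]
  rw [Finset.sum_eq_single (σ.symm i)]
  · simp [Equiv.eq_symm_apply, eq_comm]
  · intro b _ hb
    simp only [ite_mul, one_mul, zero_mul]
    rw [if_neg]
    intro hh
    exact hb (by simpa [Equiv.eq_symm_apply] using hh.symm)
  · simp

lemma quad_conj {p : ℕ} (M X : Matrix (Fin p) (Fin p) ℝ) (e : Fin p → ℝ) :
    (X *ᵥ e) ⬝ᵥ M *ᵥ (X *ᵥ e) = e ⬝ᵥ (Xᵀ * M * X) *ᵥ e := by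
  rw [Matrix.dotProduct_mulVec, Matrix.vecMul_mulVec, ← Matrix.dotProduct_mulVec,
    Matrix.mulVec_mulVec]

lemma mat_cancel {p : ℕ} (A B C : Matrix (Fin p) (Fin p) ℝ) (h : A * B = 1) :
    A * (B * C) = C := by rw [← Matrix.mul_assoc, h, one_mul]

/-- Preconditioning is vacuous for a sufficiently positive definite Hessian estimate:
if `H̄ = PᵀLQΛQᵀLᵀP` with `‖Lᵀx‖ ≤ σ̄‖x‖`, `xᵀH̄x ≥ (λ*/2)‖x‖²` and
`0 < τ ≤ λ*/(2σ̄²)`, then every diagonal entry `λⱼ` of `Λ` satisfies `λⱼ ≥ τ`;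
hence the modified diagonal `diag(max{τ,|λⱼ|})` equals `Λ` and `H̄` is unchanged. -/
theorem stmt_10 {p : ℕ} (hp : 1 ≤ p)
    (Pm L Q : Matrix (Fin p) (Fin p) ℝ)
    (hPm : IsPermutationMatrix Pm) (hL : IsUnit L) (hQ : Q * Qᵀ = 1)
    (lam : Fin p → ℝ)
    (σhi : ℝ) (hσhi : 0 < σhi)
    (hLup : ∀ x : Fin p → ℝ, euclNorm (Lᵀ *ᵥ x) ≤ σhi * euclNorm x)
    (lamstar : ℝ) (hlamstar : 0 < lamstar)
    (hpos : ∀ x : Fin p → ℝ,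
      lamstar / 2 * euclNorm x ^ 2 ≤
        x ⬝ᵥ (Pmᵀ * L * Q * Matrix.diagonal lam * Qᵀ * Lᵀ * Pm) *ᵥ x)
    (τ : ℝ) (hτ : 0 < τ) (hττ : τ ≤ lamstar / (2 * σhi ^ 2)) :
    (∀ j, τ ≤ lam j) ∧
    Matrix.diagonal (fun j => max τ |lam j|) = Matrix.diagonal lam ∧
    Pmᵀ * L * Q * Matrix.diagonal (fun j => max τ |lam j|) * Qᵀ * Lᵀ * Pm =
      Pmᵀ * L * Q * Matrix.diagonal lam * Qᵀ * Lᵀ * Pm := by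
  obtain ⟨Li, hLi1, hLi2⟩ : ∃ Li : Matrix (Fin p) (Fin p) ℝ, L * Li = 1 ∧ Li * L = 1 := by
    obtain ⟨u, hu⟩ := hL
    exact ⟨↑u⁻¹, by rw [← hu]; exact_mod_cast u.mul_inv,
      by rw [← hu]; exact_mod_cast u.inv_mul⟩
  have hPmo : Pm * Pmᵀ = 1 := perm_orth Pm hPm
  have hPmo' : Pmᵀ * Pm = 1 := mul_eq_one_comm.mp hPmo
  have hQ' : Qᵀ * Q = 1 := mul_eq_one_comm.mp hQ
  have hLt : Lᵀ * Liᵀ = 1 := by rw [← Matrix.transpose_mul, hLi2, Matrix.transpose_one]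
  set M : Matrix (Fin p) (Fin p) ℝ :=
    Pmᵀ * L * Q * Matrix.diagonal lam * Qᵀ * Lᵀ * Pm with hM
  have key : ∀ j, τ ≤ lam j := by
    intro j
    set X : Matrix (Fin p) (Fin p) ℝ := Pmᵀ * Liᵀ * Q with hX
    have hXtMX : Xᵀ * M * X = Matrix.diagonal lam := by
      simp only [hX, hM, Matrix.transpose_mul, Matrix.transpose_transpose, Matrix.mul_assoc]
      rw [mat_cancel _ _ _ hPmo, mat_cancel _ _ _ hPmo, mat_cancel _ _ _ hLi2,
        mat_cancel _ _ _ hLt, mat_cancel _ _ _ hQ', hQ', mul_one]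
    have hquad : (X *ᵥ Pi.single j 1) ⬝ᵥ M *ᵥ (X *ᵥ Pi.single j 1) = lam j := by
      rw [quad_conj, hXtMX]
      simp [dotProduct, Matrix.mulVec_diagonal, Pi.single_apply]
    have hrecov : Qᵀ *ᵥ (Lᵀ *ᵥ (Pm *ᵥ (X *ᵥ Pi.single j 1))) = Pi.single j 1 := by
      rw [Matrix.mulVec_mulVec, Matrix.mulVec_mulVec, Matrix.mulVec_mulVec]
      rw [show Qᵀ * Lᵀ * Pm * X = 1 by
        simp only [hX, Matrix.mul_assoc]
        rw [mat_cancel _ _ _ hPmo, mat_cancel _ _ _ hLt]; exact hQ']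
      rw [Matrix.one_mulVec]
    have hnx : 1 ≤ σhi * euclNorm (X *ᵥ Pi.single j 1) := by
      have h1 : euclNorm (Pi.single j 1 : Fin p → ℝ) = 1 := by
        rw [euclNorm]
        have : (∑ i, (Pi.single j 1 : Fin p → ℝ) i ^ 2) = 1 := by simp [Pi.single_apply]
        rw [this, Real.sqrt_one]
      have hQt : Qᵀᵀ * Qᵀ = 1 := by rw [Matrix.transpose_transpose]; exact hQ
      have h2 : euclNorm (Lᵀ *ᵥ (Pm *ᵥ (X *ᵥ Pi.single j 1))) = 1 := by
        have h4 := euclNorm_congr (Qᵀ *ᵥ (Lᵀ *ᵥ (Pm *ᵥ (X *ᵥ Pi.single j 1))))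
          (Lᵀ *ᵥ (Pm *ᵥ (X *ᵥ Pi.single j 1))) (dot_orth Qᵀ hQt _)
        rw [hrecov] at h4
        rw [← h4, h1]
      have h3 : euclNorm (Pm *ᵥ (X *ᵥ Pi.single j 1)) = euclNorm (X *ᵥ Pi.single j 1) :=
        euclNorm_congr _ _ (dot_orth Pm hPmo' _)
      calc 1 = euclNorm (Lᵀ *ᵥ (Pm *ᵥ (X *ᵥ Pi.single j 1))) := h2.symm
        _ ≤ σhi * euclNorm (Pm *ᵥ (X *ᵥ Pi.single j 1)) := hLup _
        _ = σhi * euclNorm (X *ᵥ Pi.single j 1) := by rw [h3]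
    have hq : lamstar / 2 * euclNorm (X *ᵥ Pi.single j 1) ^ 2 ≤ lam j :=
      (hpos (X *ᵥ Pi.single j 1)).trans_eq hquad
    have hτle : τ * (2 * σhi ^ 2) ≤ lamstar :=
      (le_div_iff₀ (by positivity)).mp hττ
    nlinarith [euclNorm_nonneg (X *ᵥ Pi.single j 1),
      sq_nonneg (σhi * euclNorm (X *ᵥ Pi.single j 1) - 1),
      mul_pos hσhi hσhi, hτ.le, hlamstar.le]
  refine ⟨key, ?_, ?_⟩
  · have hfun : (fun j => max τ |lam j|) = lam := by
      funext j
      rw [abs_of_pos (lt_of_lt_of_le hτ (key j))]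
      exact max_eq_right (key j)
    rw [hfun]
  · have hfun : (fun j => max τ |lam j|) = lam := by
      funext j
      rw [abs_of_pos (lt_of_lt_of_le hτ (key j))]
      exact max_eq_right (key j)
    rw [hfun]
end

section
/- Let p ≥ 1. Let P be a p×p permutation matrix, Q a p×p orthogonal matrix, L a real p×p invertible matrix with σ̲‖x‖ ≤ ‖Lᵀx‖ ≤ σ̄‖x‖ for all x ∈ ℝ^p (0 < σ̲ ≤ σ̄), and Λ = diag(λ_1,…,λ_p). Set H̄ := Pᵀ L Q Λ Qᵀ Lᵀ P, and suppose 0 < λ̲ ≤ |μ| ≤ λ̄ for every eigenvalue μ of the symmetric matrix H̄. For τ > 0 define Λ̄ := diag(max{τ,|λ_1|}, …, max{τ,|λ_p|}) and H̄̄ := Pᵀ L Q Λ̄ Qᵀ Lᵀ P. Then for all x ∈ ℝ^p: σ̲²·max{τ, λ̲/σ̄²}·‖x‖² ≤ xᵀ H̄̄ x ≤ σ̄²·max{τ, λ̄/σ̲²}·‖x‖². In particular all eigenvalues of H̄̄ lie in the interval [σ̲²·max{τ, λ̲/σ̄²}, σ̄²·max{τ, λ̄/σ̲²}]. -/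
open Matrix

namespace SP

variable {p : ℕ}

lemma qform (B : Matrix (Fin p) (Fin p) ℝ) (d : Fin p → ℝ) (x : Fin p → ℝ) :
    x ⬝ᵥ (Bᵀ * Matrix.diagonal d * B) *ᵥ x = ∑ j, d j * (B *ᵥ x) j ^ 2 := by
  rw [← Matrix.mulVec_mulVec, ← Matrix.mulVec_mulVec, Matrix.dotProduct_mulVec,
    Matrix.vecMul_transpose, dotProduct]
  refine Finset.sum_congr rfl fun j _ => ?_
  rw [Matrix.mulVec_diagonal]; ring

lemma orth {M : Matrix (Fin p) (Fin p) ℝ} (h : M * Mᵀ = 1) (y : Fin p → ℝ) :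
    ∑ i, (Mᵀ *ᵥ y) i ^ 2 = ∑ i, y i ^ 2 := by
  have := SP.qform Mᵀ (fun _ => 1) y
  simp only [Matrix.transpose_transpose, Matrix.diagonal_one, Matrix.mul_one, h,
    Matrix.one_mulVec, one_mul] at this
  rw [← this, dotProduct]
  exact Finset.sum_congr rfl fun j _ => by ring

lemma orth' {M : Matrix (Fin p) (Fin p) ℝ} (h : Mᵀ * M = 1) (y : Fin p → ℝ) :
    ∑ i, (M *ᵥ y) i ^ 2 = ∑ i, y i ^ 2 := by
  have := SP.orth (M := Mᵀ) (by simpa using h) y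
  simpa using this

lemma perm_mul {Pm : Matrix (Fin p) (Fin p) ℝ} (σ : Equiv.Perm (Fin p))
    (h : ∀ i j, Pm i j = if i = σ j then 1 else 0) : Pm * Pmᵀ = 1 := by
  ext i k
  simp only [Matrix.mul_apply, Matrix.transpose_apply, h, Matrix.one_apply]
  have : ∀ j, (if i = σ j then (1:ℝ) else 0) * (if k = σ j then 1 else 0)
      = if j = σ.symm i then (if k = σ j then (1:ℝ) else 0) else 0 := by
    intro j
    by_cases hj : i = σ j
    · have h2 : j = σ.symm i := by rw [hj, Equiv.symm_apply_apply]
      rw [if_pos hj, if_pos h2, one_mul]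
    · have : ¬ (j = σ.symm i) := by
        intro hc; exact hj (by rw [hc]; simp)
      simp [hj, this]
  simp only [this, Finset.sum_ite_eq', Finset.mem_univ, if_true, Equiv.apply_symm_apply]
  by_cases hik : i = k <;> simp [hik, eq_comm]

lemma euclNorm_sq (x : Fin p → ℝ) : euclNorm x ^ 2 = ∑ i, x i ^ 2 :=
  Real.sq_sqrt (Finset.sum_nonneg fun _ _ => sq_nonneg _)

lemma transfer {M : Matrix (Fin p) (Fin p) ℝ} {c : ℝ}
    (h : ∀ x, ∑ i, (Mᵀ *ᵥ x) i ^ 2 ≤ c ^ 2 * ∑ i, x i ^ 2) (x : Fin p → ℝ) :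
    ∑ i, (M *ᵥ x) i ^ 2 ≤ c ^ 2 * ∑ i, x i ^ 2 := by
  set w := M *ᵥ x with hw
  set S := ∑ i, w i ^ 2 with hS
  set T := ∑ i, x i ^ 2 with hT
  have hS0 : 0 ≤ S := Finset.sum_nonneg fun _ _ => sq_nonneg _
  have hT0 : 0 ≤ T := Finset.sum_nonneg fun _ _ => sq_nonneg _
  have hdot : S = (Mᵀ *ᵥ w) ⬝ᵥ x := by
    rw [Matrix.mulVec_transpose, ← Matrix.dotProduct_mulVec, ← hw, hS, dotProduct]
    exact Finset.sum_congr rfl fun i _ => by ring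
  have hcs : S ^ 2 ≤ (∑ i, (Mᵀ *ᵥ w) i ^ 2) * T := by
    rw [hdot, dotProduct]
    exact Finset.sum_mul_sq_le_sq_mul_sq _ _ _
  have key : S ^ 2 ≤ c ^ 2 * S * T :=
    hcs.trans (by have := h w; nlinarith)
  rcases eq_or_lt_of_le hS0 with h0 | h0
  · rw [← h0]; positivity
  · nlinarith

lemma inner_eq (x y : EuclideanSpace ℝ (Fin p)) :
    (inner ℝ x y : ℝ) = ∑ i, x i * y i := by
  simp [PiLp.inner_apply, RCLike.inner_apply, mul_comm]

lemma spectral {H : Matrix (Fin p) (Fin p) ℝ} (hH : H.IsHermitian)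
    {lamlo lamhi : ℝ}
    (heig : ∀ μ : ℝ, ∀ v : Fin p → ℝ, v ≠ 0 → H *ᵥ v = μ • v → lamlo ≤ |μ| ∧ |μ| ≤ lamhi)
    (hlo : 0 ≤ lamlo) (v : Fin p → ℝ) :
    |v ⬝ᵥ H *ᵥ v| ≤ lamhi * ∑ i, v i ^ 2 ∧
      lamlo ^ 2 * ∑ i, v i ^ 2 ≤ ∑ i, (H *ᵥ v) i ^ 2 := by
  classical
  set w := H *ᵥ v with hw
  set v' : EuclideanSpace ℝ (Fin p) := (WithLp.equiv 2 _).symm v with hv'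
  set w' : EuclideanSpace ℝ (Fin p) := (WithLp.equiv 2 _).symm w with hw'
  have hμb : ∀ i, lamlo ≤ |hH.eigenvalues i| ∧ |hH.eigenvalues i| ≤ lamhi := by
    intro i
    refine heig _ (hH.eigenvectorBasis i) ?_ (hH.mulVec_eigenvectorBasis i)
    have := hH.eigenvectorBasis.orthonormal.ne_zero i
    exact fun hc => this (by ext k; exact congrFun hc k)
  have hsymm : Hᵀ = H := by
    ext i j
    have := congrFun (congrFun hH i) j
    simpa [Matrix.conjTranspose_apply] using this
  set c : Fin p → ℝ := fun i => ∑ k, (hH.eigenvectorBasis i) k * v k with hc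
  have keyw : ∀ i, (inner ℝ (hH.eigenvectorBasis i) w' : ℝ) = hH.eigenvalues i * c i := by
    intro i
    calc (inner ℝ (hH.eigenvectorBasis i) w' : ℝ)
        = ⇑(hH.eigenvectorBasis i) ⬝ᵥ (H *ᵥ v) := by rw [SP.inner_eq]; rfl
      _ = (⇑(hH.eigenvectorBasis i) ᵥ* H) ⬝ᵥ v := Matrix.dotProduct_mulVec _ _ _
      _ = (H *ᵥ ⇑(hH.eigenvectorBasis i)) ⬝ᵥ v := by rw [← Matrix.mulVec_transpose, hsymm]
      _ = (hH.eigenvalues i • ⇑(hH.eigenvectorBasis i)) ⬝ᵥ v := by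
          rw [hH.mulVec_eigenvectorBasis i]
      _ = hH.eigenvalues i * c i := by rw [smul_dotProduct]; rfl
  have keyv : ∀ i, (inner ℝ v' (hH.eigenvectorBasis i) : ℝ) = c i := by
    intro i
    rw [SP.inner_eq, hc]
    exact Finset.sum_congr rfl fun k _ => mul_comm _ _
  have keyw' : ∀ i, (inner ℝ w' (hH.eigenvectorBasis i) : ℝ) = hH.eigenvalues i * c i := by
    intro i; rw [real_inner_comm]; exact keyw i
  have keyv' : ∀ i, (inner ℝ (hH.eigenvectorBasis i) v' : ℝ) = c i := by
    intro i; rw [real_inner_comm]; exact keyv i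
  have P1 : v ⬝ᵥ w = ∑ i, hH.eigenvalues i * c i ^ 2 := by
    have := hH.eigenvectorBasis.sum_inner_mul_inner v' w'
    simp only [keyv, keyw] at this
    rw [show (inner ℝ v' w' : ℝ) = v ⬝ᵥ w from by rw [SP.inner_eq]; rfl] at this
    rw [← this]
    exact Finset.sum_congr rfl fun i _ => by ring
  have P2 : ∑ i, w i ^ 2 = ∑ i, (hH.eigenvalues i * c i) ^ 2 := by
    have := hH.eigenvectorBasis.sum_inner_mul_inner w' w'
    simp only [keyw, keyw'] at this
    rw [show (inner ℝ w' w' : ℝ) = ∑ i, w i ^ 2 from by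
      rw [SP.inner_eq]; exact Finset.sum_congr rfl fun i _ => (sq (w i)).symm] at this
    rw [← this]
    exact Finset.sum_congr rfl fun i _ => by ring
  have P3 : ∑ i, v i ^ 2 = ∑ i, c i ^ 2 := by
    have := hH.eigenvectorBasis.sum_inner_mul_inner v' v'
    simp only [keyv, keyv'] at this
    rw [show (inner ℝ v' v' : ℝ) = ∑ i, v i ^ 2 from by
      rw [SP.inner_eq]; exact Finset.sum_congr rfl fun i _ => (sq (v i)).symm] at this
    rw [← this]
    exact Finset.sum_congr rfl fun i _ => by ring
  constructor
  · calc |v ⬝ᵥ w| = |∑ i, hH.eigenvalues i * c i ^ 2| := by rw [P1]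
      _ ≤ ∑ i, |hH.eigenvalues i * c i ^ 2| := Finset.abs_sum_le_sum_abs _ _
      _ ≤ ∑ i, lamhi * c i ^ 2 := by
          refine Finset.sum_le_sum fun i _ => ?_
          rw [abs_mul, abs_of_nonneg (sq_nonneg (c i))]
          exact mul_le_mul_of_nonneg_right (hμb i).2 (sq_nonneg _)
      _ = lamhi * ∑ i, v i ^ 2 := by rw [P3, Finset.mul_sum]
  · calc lamlo ^ 2 * ∑ i, v i ^ 2 = ∑ i, lamlo ^ 2 * c i ^ 2 := by rw [P3, Finset.mul_sum]
      _ ≤ ∑ i, (hH.eigenvalues i * c i) ^ 2 := by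
          refine Finset.sum_le_sum fun i _ => ?_
          have h1 := (hμb i).1
          have h2 : lamlo ^ 2 ≤ hH.eigenvalues i ^ 2 := by
            have := sq_abs (hH.eigenvalues i)
            nlinarith
          nlinarith [sq_nonneg (c i)]
      _ = ∑ i, w i ^ 2 := P2.symm

end SP

/-- Uniform Rayleigh-quotient (hence eigenvalue) bounds for the preconditioned Hessian
estimate: with `H̄ = PᵀLQΛQᵀLᵀP`, `σ̲‖x‖ ≤ ‖Lᵀx‖ ≤ σ̄‖x‖`, and every eigenvalue `μ` of
the symmetric matrix `H̄` satisfying `0 < λ̲ ≤ |μ| ≤ λ̄`, the modified matrix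
`H̄̄ = PᵀLQΛ̄QᵀLᵀP` with `Λ̄ = diag(max{τ,|λⱼ|})` satisfies
`σ̲²·max{τ, λ̲/σ̄²}·‖x‖² ≤ xᵀH̄̄x ≤ σ̄²·max{τ, λ̄/σ̲²}·‖x‖²` for all `x`; in particular
all eigenvalues of `H̄̄` lie in `[σ̲²·max{τ, λ̲/σ̄²}, σ̄²·max{τ, λ̄/σ̲²}]`. -/
theorem stmt_11 {p : ℕ} (hp : 1 ≤ p)
    (Pm L Q : Matrix (Fin p) (Fin p) ℝ)
    (hPm : IsPermutationMatrix Pm) (hL : IsUnit L) (hQ : Q * Qᵀ = 1)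
    (lam : Fin p → ℝ)
    (σlo σhi : ℝ) (hσlo : 0 < σlo) (hσ : σlo ≤ σhi)
    (hLlow : ∀ x : Fin p → ℝ, σlo * euclNorm x ≤ euclNorm (Lᵀ *ᵥ x))
    (hLup : ∀ x : Fin p → ℝ, euclNorm (Lᵀ *ᵥ x) ≤ σhi * euclNorm x)
    (lamlo lamhi : ℝ) (hlamlo : 0 < lamlo) (hlam : lamlo ≤ lamhi)
    (heig : ∀ μ : ℝ, ∀ v : Fin p → ℝ, v ≠ 0 →
      (Pmᵀ * L * Q * Matrix.diagonal lam * Qᵀ * Lᵀ * Pm) *ᵥ v = μ • v →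
      lamlo ≤ |μ| ∧ |μ| ≤ lamhi)
    (τ : ℝ) (hτ : 0 < τ) :
    (∀ x : Fin p → ℝ,
      σlo ^ 2 * max τ (lamlo / σhi ^ 2) * euclNorm x ^ 2 ≤
          x ⬝ᵥ (Pmᵀ * L * Q * Matrix.diagonal (fun j => max τ |lam j|) * Qᵀ * Lᵀ * Pm) *ᵥ x ∧
        x ⬝ᵥ (Pmᵀ * L * Q * Matrix.diagonal (fun j => max τ |lam j|) * Qᵀ * Lᵀ * Pm) *ᵥ x ≤
          σhi ^ 2 * max τ (lamhi / σlo ^ 2) * euclNorm x ^ 2) ∧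
    (∀ μ : ℝ, ∀ v : Fin p → ℝ, v ≠ 0 →
      (Pmᵀ * L * Q * Matrix.diagonal (fun j => max τ |lam j|) * Qᵀ * Lᵀ * Pm) *ᵥ v = μ • v →
      σlo ^ 2 * max τ (lamlo / σhi ^ 2) ≤ μ ∧ μ ≤ σhi ^ 2 * max τ (lamhi / σlo ^ 2)) := by
  classical
  have hσhi : 0 < σhi := lt_of_lt_of_le hσlo hσ
  obtain ⟨σperm, hσp⟩ := hPm
  have hPP : Pm * Pmᵀ = 1 := SP.perm_mul σperm hσp
  have hPtP : Pmᵀ * Pm = 1 := mul_eq_one_comm.mp hPP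
  have hQtQ : Qᵀ * Q = 1 := mul_eq_one_comm.mp hQ
  have hdet : IsUnit L.det := (Matrix.isUnit_iff_isUnit_det _).mp hL
  have hLinv : L⁻¹ * L = 1 := Matrix.nonsing_inv_mul _ hdet
  have hLtLi : Lᵀ * (L⁻¹)ᵀ = 1 := by
    rw [← Matrix.transpose_mul, hLinv, Matrix.transpose_one]
  set B := Qᵀ * Lᵀ * Pm with hB
  have hmat : ∀ d : Fin p → ℝ,
      Pmᵀ * L * Q * Matrix.diagonal d * Qᵀ * Lᵀ * Pm = Bᵀ * Matrix.diagonal d * B := by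
    intro d
    rw [hB]
    simp only [Matrix.transpose_mul, Matrix.transpose_transpose, Matrix.mul_assoc]
  -- squared-norm facts
  have sqQt : ∀ y : Fin p → ℝ, ∑ i, (Qᵀ *ᵥ y) i ^ 2 = ∑ i, y i ^ 2 := SP.orth hQ
  have sqQ : ∀ y : Fin p → ℝ, ∑ i, (Q *ᵥ y) i ^ 2 = ∑ i, y i ^ 2 := SP.orth' hQtQ
  have sqPm : ∀ y : Fin p → ℝ, ∑ i, (Pm *ᵥ y) i ^ 2 = ∑ i, y i ^ 2 := SP.orth' hPtP
  have sqPmt : ∀ y : Fin p → ℝ, ∑ i, (Pmᵀ *ᵥ y) i ^ 2 = ∑ i, y i ^ 2 := SP.orth hPP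
  have sqLt_up : ∀ x : Fin p → ℝ, ∑ i, (Lᵀ *ᵥ x) i ^ 2 ≤ σhi ^ 2 * ∑ i, x i ^ 2 := by
    intro x
    have h1 : euclNorm (Lᵀ *ᵥ x) ^ 2 ≤ (σhi * euclNorm x) ^ 2 :=
      pow_le_pow_left₀ (Real.sqrt_nonneg _) (hLup x) 2
    rw [SP.euclNorm_sq, mul_pow, SP.euclNorm_sq] at h1
    exact h1
  have sqLt_lo : ∀ x : Fin p → ℝ, σlo ^ 2 * ∑ i, x i ^ 2 ≤ ∑ i, (Lᵀ *ᵥ x) i ^ 2 := by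
    intro x
    have h1 : (σlo * euclNorm x) ^ 2 ≤ euclNorm (Lᵀ *ᵥ x) ^ 2 :=
      pow_le_pow_left₀ (mul_nonneg hσlo.le (Real.sqrt_nonneg _)) (hLlow x) 2
    rw [SP.euclNorm_sq, mul_pow, SP.euclNorm_sq] at h1
    exact h1
  have sqL_up : ∀ x : Fin p → ℝ, ∑ i, (L *ᵥ x) i ^ 2 ≤ σhi ^ 2 * ∑ i, x i ^ 2 :=
    SP.transfer sqLt_up
  have hBmul : ∀ x : Fin p → ℝ, B *ᵥ x = Qᵀ *ᵥ (Lᵀ *ᵥ (Pm *ᵥ x)) := by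
    intro x
    rw [Matrix.mulVec_mulVec, Matrix.mulVec_mulVec, hB]
  have hBtmul : ∀ x : Fin p → ℝ, Bᵀ *ᵥ x = Pmᵀ *ᵥ (L *ᵥ (Q *ᵥ x)) := by
    intro x
    rw [Matrix.mulVec_mulVec, Matrix.mulVec_mulVec, hB]
    simp only [Matrix.transpose_mul, Matrix.transpose_transpose, Matrix.mul_assoc]
  have sqB_up : ∀ x : Fin p → ℝ, ∑ i, (B *ᵥ x) i ^ 2 ≤ σhi ^ 2 * ∑ i, x i ^ 2 := by
    intro x
    rw [hBmul x, sqQt]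
    calc ∑ i, (Lᵀ *ᵥ (Pm *ᵥ x)) i ^ 2 ≤ σhi ^ 2 * ∑ i, (Pm *ᵥ x) i ^ 2 := sqLt_up _
      _ = σhi ^ 2 * ∑ i, x i ^ 2 := by rw [sqPm]
  have sqB_lo : ∀ x : Fin p → ℝ, σlo ^ 2 * ∑ i, x i ^ 2 ≤ ∑ i, (B *ᵥ x) i ^ 2 := by
    intro x
    rw [hBmul x, sqQt]
    calc σlo ^ 2 * ∑ i, x i ^ 2 = σlo ^ 2 * ∑ i, (Pm *ᵥ x) i ^ 2 := by rw [sqPm]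
      _ ≤ ∑ i, (Lᵀ *ᵥ (Pm *ᵥ x)) i ^ 2 := sqLt_lo _
  have sqBt_up : ∀ x : Fin p → ℝ, ∑ i, (Bᵀ *ᵥ x) i ^ 2 ≤ σhi ^ 2 * ∑ i, x i ^ 2 := by
    intro x
    rw [hBtmul x, sqPmt]
    calc ∑ i, (L *ᵥ (Q *ᵥ x)) i ^ 2 ≤ σhi ^ 2 * ∑ i, (Q *ᵥ x) i ^ 2 := sqL_up _
      _ = σhi ^ 2 * ∑ i, x i ^ 2 := by rw [sqQ]
  -- Hermitian-ness of H
  set H := Bᵀ * Matrix.diagonal lam * B with hHdef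
  have hH : H.IsHermitian := by
    rw [hHdef]
    have hBc : Bᵀ = Bᴴ := by ext i j; simp [Matrix.conjTranspose_apply]
    rw [hBc]
    exact Matrix.isHermitian_conjTranspose_mul_mul B (Matrix.isHermitian_diagonal lam)
  have heig' : ∀ μ : ℝ, ∀ v : Fin p → ℝ, v ≠ 0 → H *ᵥ v = μ • v →
      lamlo ≤ |μ| ∧ |μ| ≤ lamhi := by
    intro μ v hv hmv
    exact heig μ v hv (by rw [hmat lam]; exact hmv)
  have spec := SP.spectral hH heig' hlamlo.le
  -- bounds on |lam j|
  have hlamj : ∀ j, lamlo / σhi ^ 2 ≤ |lam j| ∧ |lam j| ≤ lamhi / σlo ^ 2 := by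
    intro j
    set e : Fin p → ℝ := Pi.single j 1 with he
    set vj : Fin p → ℝ := Pmᵀ *ᵥ ((L⁻¹)ᵀ *ᵥ (Q *ᵥ e)) with hvj
    have m1 : B * Pmᵀ = Qᵀ * Lᵀ := by
      rw [hB, Matrix.mul_assoc, hPP, Matrix.mul_one]
    have hBv : B *ᵥ vj = e := by
      rw [hvj, Matrix.mulVec_mulVec, Matrix.mulVec_mulVec, Matrix.mulVec_mulVec,
        m1, Matrix.mul_assoc Qᵀ Lᵀ (L⁻¹)ᵀ, hLtLi, Matrix.mul_one, hQtQ, Matrix.one_mulVec]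
    have sqe : ∑ i, e i ^ 2 = 1 := by rw [he]; simp [Pi.single_apply, sq]
    set Sv := ∑ i, vj i ^ 2 with hSv
    have hSv0 : 0 ≤ Sv := Finset.sum_nonneg fun _ _ => sq_nonneg _
    have hSvhi : σlo ^ 2 * Sv ≤ 1 := by
      have := sqB_lo vj; rw [hBv, sqe] at this; exact this
    have hSvlo : 1 ≤ σhi ^ 2 * Sv := by
      have := sqB_up vj; rw [hBv, sqe] at this; exact this
    have qf : vj ⬝ᵥ H *ᵥ vj = lam j := by
      rw [hHdef, SP.qform, hBv, he]
      simp [Pi.single_apply, sq]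
    constructor
    · -- lower bound on |lam j|
      have Hvj : H *ᵥ vj = lam j • (Bᵀ *ᵥ e) := by
        have step : H *ᵥ vj = Bᵀ *ᵥ (Matrix.diagonal lam *ᵥ (B *ᵥ vj)) := by
          rw [hHdef, ← Matrix.mulVec_mulVec, ← Matrix.mulVec_mulVec]
        rw [step, hBv, he, Matrix.diagonal_mulVec_single,
          show (Pi.single j (lam j * 1) : Fin p → ℝ) = lam j • (Pi.single j 1 : Fin p → ℝ) from by
            ext k; by_cases h : k = j <;> simp [Pi.single_apply, h],
          Matrix.mulVec_smul]
      have hspec := (spec vj).2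
      have hHv : ∑ i, (H *ᵥ vj) i ^ 2 = lam j ^ 2 * ∑ i, (Bᵀ *ᵥ e) i ^ 2 := by
        rw [Hvj, Finset.mul_sum]
        exact Finset.sum_congr rfl fun i _ => by
          simp [Pi.smul_apply, smul_eq_mul]; ring
      have hBte : ∑ i, (Bᵀ *ᵥ e) i ^ 2 ≤ σhi ^ 2 := by
        have := sqBt_up e; rw [sqe, mul_one] at this; exact this
      -- lamlo^2 * Sv ≤ lam j ^2 * σhi^2, Sv ≥ 1/σhi^2
      have key : lamlo ^ 2 * Sv ≤ lam j ^ 2 * σhi ^ 2 := by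
        refine hspec.trans ?_
        rw [hHv]
        exact mul_le_mul_of_nonneg_left hBte (sq_nonneg _)
      have habs : 0 ≤ |lam j| := abs_nonneg _
      have hsq : lam j ^ 2 = |lam j| ^ 2 := (sq_abs _).symm
      rw [hsq] at key
      rw [div_le_iff₀ (by positivity)]
      have h3 : lamlo ^ 2 ≤ (|lam j| * σhi ^ 2) ^ 2 := by
        nlinarith [mul_le_mul_of_nonneg_left hSvlo (sq_nonneg lamlo),
          mul_le_mul_of_nonneg_left key (sq_nonneg σhi)]
      exact (pow_le_pow_iff_left₀ hlamlo.le (by positivity) two_ne_zero).mp h3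
    · -- upper bound on |lam j|
      have hspec := (spec vj).1
      rw [qf] at hspec
      have hlamhi : 0 < lamhi := lt_of_lt_of_le hlamlo hlam
      rw [le_div_iff₀ (by positivity)]
      nlinarith
  -- main part 1
  set m := max τ (lamlo / σhi ^ 2) with hm
  set M := max τ (lamhi / σlo ^ 2) with hM
  have hm0 : 0 < m := lt_max_of_lt_left hτ
  have hM0 : 0 < M := lt_max_of_lt_left hτ
  have hmj : ∀ j, m ≤ max τ |lam j| ∧ max τ |lam j| ≤ M := fun j =>
    ⟨max_le_max le_rfl (hlamj j).1, max_le_max le_rfl (hlamj j).2⟩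
  have part1 : ∀ x : Fin p → ℝ,
      σlo ^ 2 * m * euclNorm x ^ 2 ≤
          x ⬝ᵥ (Bᵀ * Matrix.diagonal (fun j => max τ |lam j|) * B) *ᵥ x ∧
        x ⬝ᵥ (Bᵀ * Matrix.diagonal (fun j => max τ |lam j|) * B) *ᵥ x ≤
          σhi ^ 2 * M * euclNorm x ^ 2 := by
    intro x
    rw [SP.qform, SP.euclNorm_sq]
    set y := B *ᵥ x with hy
    have hylo := sqB_lo x
    have hyup := sqB_up x
    have hlow : m * ∑ i, y i ^ 2 ≤ ∑ j, max τ |lam j| * y j ^ 2 := by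
      rw [Finset.mul_sum]
      exact Finset.sum_le_sum fun j _ =>
        mul_le_mul_of_nonneg_right (hmj j).1 (sq_nonneg _)
    have hup : ∑ j, max τ |lam j| * y j ^ 2 ≤ M * ∑ i, y i ^ 2 := by
      rw [Finset.mul_sum]
      exact Finset.sum_le_sum fun j _ =>
        mul_le_mul_of_nonneg_right (hmj j).2 (sq_nonneg _)
    constructor
    · calc σlo ^ 2 * m * ∑ i, x i ^ 2 = m * (σlo ^ 2 * ∑ i, x i ^ 2) := by ring
        _ ≤ m * ∑ i, y i ^ 2 := mul_le_mul_of_nonneg_left hylo hm0.le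
        _ ≤ ∑ j, max τ |lam j| * y j ^ 2 := hlow
    · calc ∑ j, max τ |lam j| * y j ^ 2 ≤ M * ∑ i, y i ^ 2 := hup
        _ ≤ M * (σhi ^ 2 * ∑ i, x i ^ 2) := mul_le_mul_of_nonneg_left hyup hM0.le
        _ = σhi ^ 2 * M * ∑ i, x i ^ 2 := by ring
  constructor
  · intro x
    rw [hmat]
    exact part1 x
  · intro μ v hv hmv
    rw [hmat] at hmv
    have hS : 0 < ∑ i, v i ^ 2 := by
      obtain ⟨i, hi⟩ := Function.ne_iff.mp hv
      exact Finset.sum_pos' (fun _ _ => sq_nonneg _)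
        ⟨i, Finset.mem_univ i, pow_two_pos_of_ne_zero hi⟩
    have qfv : v ⬝ᵥ (Bᵀ * Matrix.diagonal (fun j => max τ |lam j|) * B) *ᵥ v
        = μ * ∑ i, v i ^ 2 := by
      rw [hmv, dotProduct_smul, smul_eq_mul, dotProduct]
      congr 1
      exact Finset.sum_congr rfl fun i _ => (sq (v i)).symm
    have h1 := (part1 v).1
    have h2 := (part1 v).2
    rw [qfv, SP.euclNorm_sq] at h1 h2
    constructor
    · exact le_of_mul_le_mul_right (by linarith) hS
    · exact le_of_mul_le_mul_right (by linarith) hS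
end

section
/- Let (x_k)_{k∈ℕ} be a real sequence with 0 < x̲ ≤ x_k ≤ X < ∞ for all k (for some constants x̲, X), and let (z_k)_{k∈ℕ} satisfy 0 ≤ z_k ≤ z̄ for all k, where z̄ < 1. For j ≤ k define ν_{j,k} := (1 − z_j)·∏_{i=j+1}^{k} z_i. Then limsup_{k→∞} ∑_{j=1}^{k} ν_{j,k}·x_j ≤ limsup_{k→∞} x_k. -/
private lemma nu_sum_le_one (z : ℕ → ℝ) (hz0 : ∀ k, 0 ≤ z k) :
    ∀ k, ∑ j ∈ Finset.Icc 1 k, ((1 - z j) * ∏ i ∈ Finset.Icc (j + 1) k, z i) ≤ 1 := by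
  intro k
  induction k with
  | zero => simp
  | succ k ih =>
    have hins : Finset.Icc 1 (k + 1) = insert (k + 1) (Finset.Icc 1 k) :=
      (Finset.insert_Icc_right_eq_Icc_add_one (by omega)).symm
    rw [hins, Finset.sum_insert (by simp)]
    have h1 : ((1 - z (k + 1)) * ∏ i ∈ Finset.Icc (k + 1 + 1) (k + 1), z i)
        = 1 - z (k + 1) := by
      rw [Finset.Icc_eq_empty (by omega)]; simp
    have h2 : ∑ j ∈ Finset.Icc 1 k, ((1 - z j) * ∏ i ∈ Finset.Icc (j + 1) (k + 1), z i)
        = z (k + 1) * ∑ j ∈ Finset.Icc 1 k, ((1 - z j) * ∏ i ∈ Finset.Icc (j + 1) k, z i) := by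
      rw [Finset.mul_sum]
      refine Finset.sum_congr rfl fun j hj => ?_
      have hjk : j ≤ k := (Finset.mem_Icc.mp hj).2
      rw [Finset.prod_Icc_succ_top (by omega)]
      ring
    rw [h1, h2]
    nlinarith [hz0 (k + 1)]

/-- Weighted-average limsup lemma: if `0 < x̲ ≤ x k ≤ X` and `0 ≤ z k ≤ z̄ < 1`,
and `ν_{j,k} = (1 - z j) ∏_{i=j+1}^{k} z i`, then
`limsup_k ∑_{j=1}^{k} ν_{j,k} x j ≤ limsup_k x k`. -/
theorem stmt_14 (x z : ℕ → ℝ) (xlo X : ℝ) (hxlo : 0 < xlo)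
    (hxbound : ∀ k, xlo ≤ x k ∧ x k ≤ X)
    (zbar : ℝ) (hzbar : zbar < 1) (hz : ∀ k, 0 ≤ z k ∧ z k ≤ zbar) :
    Filter.limsup
        (fun k => ∑ j ∈ Finset.Icc 1 k,
          ((1 - z j) * ∏ i ∈ Finset.Icc (j + 1) k, z i) * x j)
        Filter.atTop ≤
      Filter.limsup x Filter.atTop := by
  set L := Filter.limsup x Filter.atTop with hLdef
  have hz0 : ∀ k, 0 ≤ z k := fun k => (hz k).1
  have hzb0 : (0:ℝ) ≤ zbar := le_trans (hz0 0) (hz 0).2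
  have hz1 : ∀ k, z k ≤ 1 := fun k => le_of_lt (lt_of_le_of_lt (hz k).2 hzbar)
  have hX : 0 < X := lt_of_lt_of_le hxlo (le_trans (hxbound 0).1 (hxbound 0).2)
  have hbddx : Filter.IsBoundedUnder (· ≤ ·) Filter.atTop x :=
    Filter.isBoundedUnder_of ⟨X, fun k => (hxbound k).2⟩
  have hL : xlo ≤ L := Filter.le_limsup_of_frequently_le
    (Filter.Eventually.frequently (Filter.Eventually.of_forall fun k => (hxbound k).1)) hbddx
  have hx0 : ∀ j, 0 ≤ x j := fun j => le_trans hxlo.le (hxbound j).1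
  have hnu_nonneg : ∀ j k, 0 ≤ (1 - z j) * ∏ i ∈ Finset.Icc (j + 1) k, z i := fun j k =>
    mul_nonneg (by linarith [hz1 j]) (Finset.prod_nonneg fun i _ => hz0 i)
  have hS_nonneg : ∀ k, 0 ≤
      ∑ j ∈ Finset.Icc 1 k, ((1 - z j) * ∏ i ∈ Finset.Icc (j + 1) k, z i) * x j :=
    fun k => Finset.sum_nonneg fun j _ => mul_nonneg (hnu_nonneg j k) (hx0 j)
  have hcob : Filter.IsCoboundedUnder (· ≤ ·) Filter.atTop
      (fun k => ∑ j ∈ Finset.Icc 1 k, ((1 - z j) * ∏ i ∈ Finset.Icc (j + 1) k, z i) * x j) :=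
    Filter.isCoboundedUnder_le_of_le Filter.atTop hS_nonneg
  refine le_of_forall_pos_le_add fun ε hε => ?_
  have hev : ∀ᶠ k in Filter.atTop, x k < L + ε / 2 :=
    Filter.eventually_lt_of_limsup_lt (by linarith) hbddx
  obtain ⟨N0, hN0⟩ := Filter.eventually_atTop.mp hev
  set N := max N0 1 with hNdef
  have hN1 : 1 ≤ N := le_max_right _ _
  -- tail of small weights tends to 0
  have htend : Filter.Tendsto (fun k : ℕ => (N : ℝ) * X * zbar ^ (k + 1 - N))
      Filter.atTop (nhds 0) := by
    have h1 : Filter.Tendsto (fun m : ℕ => zbar ^ m) Filter.atTop (nhds 0) :=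
      tendsto_pow_atTop_nhds_zero_of_lt_one hzb0 hzbar
    have h2 : Filter.Tendsto (fun k : ℕ => k + 1 - N) Filter.atTop Filter.atTop :=
      Filter.tendsto_atTop_atTop.mpr fun b => ⟨b + N, fun a ha => by omega⟩
    simpa using (h1.comp h2).const_mul ((N : ℝ) * X)
  have hev2 : ∀ᶠ k in Filter.atTop, (N : ℝ) * X * zbar ^ (k + 1 - N) ≤ ε / 2 :=
    htend.eventually (eventually_le_nhds (by linarith))
  refine Filter.limsup_le_of_le hcob ?_
  filter_upwards [hev2, Filter.eventually_ge_atTop N] with k hk1 hk2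
  -- split the sum
  have hsplit : ∑ j ∈ Finset.Icc 1 k, ((1 - z j) * ∏ i ∈ Finset.Icc (j + 1) k, z i) * x j
      = (∑ j ∈ Finset.Ico 1 N, ((1 - z j) * ∏ i ∈ Finset.Icc (j + 1) k, z i) * x j)
        + ∑ j ∈ Finset.Icc N k, ((1 - z j) * ∏ i ∈ Finset.Icc (j + 1) k, z i) * x j := by
    rw [← Finset.Ico_add_one_right_eq_Icc, ← Finset.Ico_add_one_right_eq_Icc (a := N),
      Finset.sum_Ico_consecutive _ hN1 (by omega)]
  rw [hsplit]
  -- bound the first chunk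
  have hA : ∑ j ∈ Finset.Ico 1 N, ((1 - z j) * ∏ i ∈ Finset.Icc (j + 1) k, z i) * x j
      ≤ (N : ℝ) * X * zbar ^ (k + 1 - N) := by
    have hterm : ∀ j ∈ Finset.Ico 1 N,
        ((1 - z j) * ∏ i ∈ Finset.Icc (j + 1) k, z i) * x j ≤ zbar ^ (k + 1 - N) * X := by
      intro j hj
      have hjN : j < N := (Finset.mem_Ico.mp hj).2
      have hnu : (1 - z j) * ∏ i ∈ Finset.Icc (j + 1) k, z i ≤ zbar ^ (k + 1 - N) := by
        have h1 : (1 - z j) * ∏ i ∈ Finset.Icc (j + 1) k, z i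
            ≤ ∏ i ∈ Finset.Icc (j + 1) k, z i :=
          mul_le_of_le_one_left (Finset.prod_nonneg fun i _ => hz0 i) (by linarith [hz0 j])
        have h2 : ∏ i ∈ Finset.Icc (j + 1) k, z i ≤ zbar ^ (k - j) := by
          calc ∏ i ∈ Finset.Icc (j + 1) k, z i ≤ ∏ i ∈ Finset.Icc (j + 1) k, zbar :=
                Finset.prod_le_prod (fun i _ => hz0 i) (fun i _ => (hz i).2)
            _ = zbar ^ (k - j) := by rw [Finset.prod_const, Nat.card_Icc]; congr 1; omega
        have h3 : zbar ^ (k - j) ≤ zbar ^ (k + 1 - N) :=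
          pow_le_pow_of_le_one hzb0 hzbar.le (by omega)
        linarith
      exact mul_le_mul hnu (hxbound j).2 (hx0 j) (pow_nonneg hzb0 _)
    calc ∑ j ∈ Finset.Ico 1 N, ((1 - z j) * ∏ i ∈ Finset.Icc (j + 1) k, z i) * x j
        ≤ (Finset.Ico 1 N).card • (zbar ^ (k + 1 - N) * X) :=
          Finset.sum_le_card_nsmul _ _ _ hterm
      _ = ((N - 1 : ℕ) : ℝ) * (zbar ^ (k + 1 - N) * X) := by
          rw [Nat.card_Ico, nsmul_eq_mul]
      _ ≤ (N : ℝ) * (zbar ^ (k + 1 - N) * X) := by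
          apply mul_le_mul_of_nonneg_right _ (mul_nonneg (pow_nonneg hzb0 _) hX.le)
          exact_mod_cast Nat.sub_le N 1
      _ = (N : ℝ) * X * zbar ^ (k + 1 - N) := by ring
  -- bound the second chunk
  have hB : ∑ j ∈ Finset.Icc N k, ((1 - z j) * ∏ i ∈ Finset.Icc (j + 1) k, z i) * x j
      ≤ L + ε / 2 := by
    have hLε : (0:ℝ) ≤ L + ε / 2 := by linarith
    calc ∑ j ∈ Finset.Icc N k, ((1 - z j) * ∏ i ∈ Finset.Icc (j + 1) k, z i) * x j
        ≤ ∑ j ∈ Finset.Icc N k, ((1 - z j) * ∏ i ∈ Finset.Icc (j + 1) k, z i) * (L + ε / 2) := by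
          refine Finset.sum_le_sum fun j hj => ?_
          have hjN : N ≤ j := (Finset.mem_Icc.mp hj).1
          exact mul_le_mul_of_nonneg_left
            (le_of_lt (hN0 j (le_trans (le_max_left _ _) hjN))) (hnu_nonneg j k)
      _ = (∑ j ∈ Finset.Icc N k, ((1 - z j) * ∏ i ∈ Finset.Icc (j + 1) k, z i)) * (L + ε / 2) := by
          rw [Finset.sum_mul]
      _ ≤ 1 * (L + ε / 2) := by
          refine mul_le_mul_of_nonneg_right ?_ hLε
          calc ∑ j ∈ Finset.Icc N k, ((1 - z j) * ∏ i ∈ Finset.Icc (j + 1) k, z i)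
              ≤ ∑ j ∈ Finset.Icc 1 k, ((1 - z j) * ∏ i ∈ Finset.Icc (j + 1) k, z i) :=
                Finset.sum_le_sum_of_subset_of_nonneg
                  (Finset.Icc_subset_Icc hN1 le_rfl) (fun j _ _ => hnu_nonneg j k)
            _ ≤ 1 := nu_sum_le_one z hz0 k
      _ = L + ε / 2 := one_mul _
  linarith
end

section
/- Let 𝒞, ℒ be reals with ℒ ≥ 𝒞 > 0 and R := ℒ/𝒞. (i) If 1 ≤ R ≤ (1 + √5)/2, then 𝒞⁴(q + 2)² − 4𝒞²ℒ(ℒ − 𝒞)(q + 1) > 0 for every q > 0. (ii) If R > (1 + √5)/2, then 𝒞⁴(q + 2)² − 4𝒞²ℒ(ℒ − 𝒞)(q + 1) > 0 for every q > 2(R² − R − 1) + 2√(R(R − 1)(R² − R − 1)). -/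
/-- Let `ℒ ≥ 𝒞 > 0` with ratio `R = ℒ/𝒞`.
(i) If `1 ≤ R ≤ (1+√5)/2`, then `𝒞⁴(q+2)² − 4𝒞²ℒ(ℒ−𝒞)(q+1) > 0` for all `q > 0`.
(ii) If `R > (1+√5)/2`, the same holds for all `q > 2(R²−R−1) + 2√(R(R−1)(R²−R−1))`. -/
theorem stmt_16 (C L : ℝ) (hC : 0 < C) (hCL : C ≤ L)
    (R : ℝ) (hR : R = L / C) :
    ((1 ≤ R ∧ R ≤ (1 + Real.sqrt 5) / 2) →
      ∀ q : ℝ, 0 < q →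
        0 < C ^ 4 * (q + 2) ^ 2 - 4 * C ^ 2 * L * (L - C) * (q + 1)) ∧
    ((1 + Real.sqrt 5) / 2 < R →
      ∀ q : ℝ,
        2 * (R ^ 2 - R - 1) + 2 * Real.sqrt (R * (R - 1) * (R ^ 2 - R - 1)) < q →
        0 < C ^ 4 * (q + 2) ^ 2 - 4 * C ^ 2 * L * (L - C) * (q + 1)) := by
  have hL : L = R * C := by
    rw [hR]; field_simp
  have hR1 : 1 ≤ R := by
    rw [hR]; rw [le_div_iff₀ hC]; linarith
  have hs5 : Real.sqrt 5 ^ 2 = 5 := Real.sq_sqrt (by norm_num)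
  have hs5' : (2:ℝ) ≤ Real.sqrt 5 := by
    nlinarith [Real.sqrt_nonneg 5]
  have key : ∀ q : ℝ, C ^ 4 * (q + 2) ^ 2 - 4 * C ^ 2 * L * (L - C) * (q + 1)
      = C ^ 4 * ((q + 2) ^ 2 - 4 * (R * (R - 1)) * (q + 1)) := by
    intro q; rw [hL]; ring
  have hC4 : 0 < C ^ 4 := by positivity
  constructor
  · rintro ⟨h1, h2⟩ q hq
    rw [key]
    have hK : R * (R - 1) ≤ 1 := by nlinarith
    have hg : 0 < (q + 2) ^ 2 - 4 * (R * (R - 1)) * (q + 1) := by nlinarith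
    exact mul_pos hC4 hg
  · intro h q hq
    rw [key]
    have hS : 0 < R ^ 2 - R - 1 := by nlinarith
    have hnn : 0 ≤ R * (R - 1) * (R ^ 2 - R - 1) := by nlinarith
    set t := Real.sqrt (R * (R - 1) * (R ^ 2 - R - 1)) with ht
    have ht2 : t ^ 2 = R * (R - 1) * (R ^ 2 - R - 1) := Real.sq_sqrt hnn
    have ht0 : 0 ≤ t := Real.sqrt_nonneg _
    have ha : 0 < q - 2 * (R ^ 2 - R - 1) - 2 * t := by linarith
    have hb : 0 < q - 2 * (R ^ 2 - R - 1) + 2 * t := by linarith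
    have hg : 0 < (q + 2) ^ 2 - 4 * (R * (R - 1)) * (q + 1) := by
      nlinarith [mul_pos ha hb]
    exact mul_pos hC4 hg
end

section
/- Let 𝒞, ℒ be reals with ℒ ≥ 𝒞 > 0 and R := ℒ/𝒞. Define q₁(R) := 2(R² − 1) + 2R√(R² − 1), q₂(R) := 2(R² − R − 1) + 2√(R(R − 1)(R² − R − 1)), and for q > 0, μ_±(q) := [q + 2 ± √(q² + 4(1 + R − R²)q + 4(1 + R − R²))]/(2(q + 1)). Suppose the slack q > 0 and the gain a > 0 are chosen as follows: (i) if R = 1, then q > 0 is arbitrary and 1 ≤ aℒ < 1 + 1/(q + 1); (ii) if 1 < R < (1 + √5)/2, then 0 < q ≤ q₁(R) and 1/(q + 1) ≤ aℒ < μ₊(q); (iii) if R ≥ (1 + √5)/2, then q₂(R) < q ≤ q₁(R) and μ₋(q) < aℒ < μ₊(q). Then u := ℒ/𝒞 + a𝒞[(q + 1)(aℒ − 1) − 1] satisfies 0 ≤ u < 1, and v := a[aℒ(q + 1) − 1]/(q𝒞) satisfies v ≥ 0. -/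
/-- Upper limit `q₁(R) = 2(R²−1) + 2R√(R²−1)` for the slack variable. -/
noncomputable def q1 (R : ℝ) : ℝ := 2 * (R ^ 2 - 1) + 2 * R * Real.sqrt (R ^ 2 - 1)

/-- Lower limit `q₂(R) = 2(R²−R−1) + 2√(R(R−1)(R²−R−1))` for the slack variable. -/
noncomputable def q2 (R : ℝ) : ℝ :=
  2 * (R ^ 2 - R - 1) + 2 * Real.sqrt (R * (R - 1) * (R ^ 2 - R - 1))

/-- `μ₊(q) = (q + 2 + √(q² + 4(1+R−R²)q + 4(1+R−R²)))/(2(q+1))`. -/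
noncomputable def muPlus (R q : ℝ) : ℝ :=
  (q + 2 + Real.sqrt (q ^ 2 + 4 * (1 + R - R ^ 2) * q + 4 * (1 + R - R ^ 2))) /
    (2 * (q + 1))

/-- `μ₋(q) = (q + 2 − √(q² + 4(1+R−R²)q + 4(1+R−R²)))/(2(q+1))`. -/
noncomputable def muMinus (R q : ℝ) : ℝ :=
  (q + 2 - Real.sqrt (q ^ 2 + 4 * (1 + R - R ^ 2) * q + 4 * (1 + R - R ^ 2))) /
    (2 * (q + 1))

lemma lem_hu0 (R q x : ℝ) (hR : 1 ≤ R) (hq : 0 < q) (hq1 : q ≤ q1 R) :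
    0 ≤ (q + 1) * x ^ 2 - (q + 2) * x + R ^ 2 := by
  have hw2 : Real.sqrt (R ^ 2 - 1) ^ 2 = R ^ 2 - 1 := Real.sq_sqrt (by nlinarith)
  have hw0 : 0 ≤ Real.sqrt (R ^ 2 - 1) := Real.sqrt_nonneg _
  set w := Real.sqrt (R ^ 2 - 1) with hw
  have hwR : w ≤ R := by nlinarith
  have hq1' : q ≤ 2 * w ^ 2 + 2 * R * w := by
    have := hq1; unfold q1 at this; rw [← hw] at this; nlinarith
  have hD' : q ^ 2 ≤ 4 * (R ^ 2 - 1) * (q + 1) := by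
    nlinarith [mul_nonneg (by linarith : (0:ℝ) ≤ 2 * w ^ 2 + 2 * R * w - q)
      (by nlinarith : (0:ℝ) ≤ q - (2 * w ^ 2 - 2 * R * w))]
  nlinarith [sq_nonneg (2 * (q + 1) * x - (q + 2)), hD', hq]

set_option maxHeartbeats 1000000 in
/-- Slack-variable and gain selection: under the stated case analysis on `R = ℒ/𝒞`,
the coefficient `u = ℒ/𝒞 + a𝒞[(q+1)(aℒ−1)−1]` satisfies `0 ≤ u < 1`, and
`v = a[aℒ(q+1)−1]/(q𝒞)` satisfies `v ≥ 0`. -/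
theorem stmt_17 (C L : ℝ) (hC : 0 < C) (hCL : C ≤ L)
    (R : ℝ) (hR : R = L / C) (q a : ℝ) (hq : 0 < q) (ha : 0 < a)
    (hcase :
      (R = 1 ∧ 1 ≤ a * L ∧ a * L < 1 + 1 / (q + 1)) ∨
      (1 < R ∧ R < (1 + Real.sqrt 5) / 2 ∧ q ≤ q1 R ∧
        1 / (q + 1) ≤ a * L ∧ a * L < muPlus R q) ∨
      ((1 + Real.sqrt 5) / 2 ≤ R ∧ q2 R < q ∧ q ≤ q1 R ∧
        muMinus R q < a * L ∧ a * L < muPlus R q)) :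
    (0 ≤ L / C + a * C * ((q + 1) * (a * L - 1) - 1) ∧
      L / C + a * C * ((q + 1) * (a * L - 1) - 1) < 1) ∧
    0 ≤ a * (a * L * (q + 1) - 1) / (q * C) := by
  have hLpos : 0 < L := lt_of_lt_of_le hC hCL
  have hRpos : 0 < R := by rw [hR]; positivity
  have hR1 : 1 ≤ R := by rw [hR]; exact (one_le_div hC).mpr hCL
  have hL : L = R * C := by rw [hR]; field_simp
  have key : ((q + 1) * (a*L) ^ 2 - (q + 2) * (a*L) + (R ^ 2 - R) < 0) ∧
      (0 ≤ (q + 1) * (a*L) ^ 2 - (q + 2) * (a*L) + R ^ 2) ∧ 1 ≤ (q + 1) * (a*L) := by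
    have hq1pos : (0:ℝ) < q + 1 := by linarith
    rcases hcase with ⟨h1, h2, h3⟩ | ⟨h1, h2, h3, h4, h5⟩ | ⟨h1, h2, h3, h4, h5⟩
    · -- case R = 1
      have h3' : a * L * (q + 1) < q + 2 := by
        rw [show (1:ℝ) + 1 / (q + 1) = (q + 2) / (q + 1) by field_simp; ring,
          lt_div_iff₀ hq1pos] at h3
        exact h3
      have hf1 : (0:ℝ) ≤ (q + 1) * (a * L) - 1 := by nlinarith
      have hf2 : (0:ℝ) ≤ a * L - 1 := by linarith
      refine ⟨by rw [h1]; nlinarith, by rw [h1]; nlinarith [mul_nonneg hf1 hf2], by nlinarith⟩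
    · -- case 1 < R < φ
      have hs5 : Real.sqrt 5 ^ 2 = 5 := Real.sq_sqrt (by norm_num)
      have hs50 : (0:ℝ) ≤ Real.sqrt 5 := Real.sqrt_nonneg 5
      have hc : 0 < 1 + R - R ^ 2 := by
        nlinarith [mul_pos (by linarith : (0:ℝ) < Real.sqrt 5 - (2 * R - 1))
          (by nlinarith : (0:ℝ) < Real.sqrt 5 + (2 * R - 1))]
      set D := q ^ 2 + 4 * (1 + R - R ^ 2) * q + 4 * (1 + R - R ^ 2) with hDdef
      have hD : 0 < D := by rw [hDdef]; nlinarith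
      have hsD2 : Real.sqrt D ^ 2 = D := Real.sq_sqrt hD.le
      have hsD0 : 0 ≤ Real.sqrt D := Real.sqrt_nonneg D
      have hsDq : q < Real.sqrt D := by nlinarith
      have h4' : 1 ≤ (q + 1) * (a * L) := by
        rw [div_le_iff₀ hq1pos] at h4; linarith [h4]
      have h5' : 2 * (q + 1) * (a * L) - (q + 2) < Real.sqrt D := by
        unfold muPlus at h5
        rw [← hDdef, lt_div_iff₀ (by linarith : (0:ℝ) < 2 * (q + 1))] at h5
        linarith
      have hlow : -Real.sqrt D < 2 * (q + 1) * (a * L) - (q + 2) := by linarith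
      refine ⟨?_, lem_hu0 R q (a*L) (le_of_lt h1) hq h3, h4'⟩
      nlinarith [mul_pos (by linarith : (0:ℝ) < Real.sqrt D - (2 * (q + 1) * (a*L) - (q + 2)))
        (by linarith : (0:ℝ) < Real.sqrt D + (2 * (q + 1) * (a*L) - (q + 2))), hsD2]
    · -- case R ≥ φ
      have hs5 : Real.sqrt 5 ^ 2 = 5 := Real.sq_sqrt (by norm_num)
      have hs50 : (0:ℝ) ≤ Real.sqrt 5 := Real.sqrt_nonneg 5
      have hsle : Real.sqrt 5 ≤ 2 * R - 1 := by linarith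
      have hc' : 0 ≤ R ^ 2 - R - 1 := by
        nlinarith [mul_le_mul hsle hsle hs50 (by linarith : (0:ℝ) ≤ 2 * R - 1)]
      have hw'2 : Real.sqrt (R * (R - 1) * (R ^ 2 - R - 1)) ^ 2
          = R * (R - 1) * (R ^ 2 - R - 1) :=
        Real.sq_sqrt (mul_nonneg (mul_nonneg (by linarith) (by linarith)) hc')
      have hw'0 : 0 ≤ Real.sqrt (R * (R - 1) * (R ^ 2 - R - 1)) := Real.sqrt_nonneg _
      set w := Real.sqrt (R * (R - 1) * (R ^ 2 - R - 1)) with hwdef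
      have h2' : 2 * (R ^ 2 - R - 1) + 2 * w < q := by
        unfold q2 at h2; rw [← hwdef] at h2; linarith
      set D := q ^ 2 + 4 * (1 + R - R ^ 2) * q + 4 * (1 + R - R ^ 2) with hDdef
      have hD : 0 < D := by
        rw [hDdef]
        nlinarith [mul_pos (by linarith : (0:ℝ) < q - (2 * (R ^ 2 - R - 1) + 2 * w))
          (by linarith : (0:ℝ) < q - (2 * (R ^ 2 - R - 1) - 2 * w)), hw'2]
      have hsD2 : Real.sqrt D ^ 2 = D := Real.sq_sqrt hD.le
      have hsD0 : 0 ≤ Real.sqrt D := Real.sqrt_nonneg D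
      have hsDq : Real.sqrt D ≤ q := by
        have hDle : D ≤ q ^ 2 := by rw [hDdef]; nlinarith
        calc Real.sqrt D ≤ Real.sqrt (q ^ 2) := Real.sqrt_le_sqrt hDle
          _ = q := by rw [Real.sqrt_sq hq.le]
      have h4' : q + 2 - Real.sqrt D < 2 * (q + 1) * (a * L) := by
        unfold muMinus at h4
        rw [← hDdef, div_lt_iff₀ (by linarith : (0:ℝ) < 2 * (q + 1))] at h4
        linarith
      have h5' : 2 * (q + 1) * (a * L) - (q + 2) < Real.sqrt D := by
        unfold muPlus at h5
        rw [← hDdef, lt_div_iff₀ (by linarith : (0:ℝ) < 2 * (q + 1))] at h5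
        linarith
      have hk3 : 1 ≤ (q + 1) * (a * L) := by linarith
      refine ⟨?_, lem_hu0 R q (a*L) hR1 hq h3, hk3⟩
      nlinarith [mul_pos (by linarith : (0:ℝ) < Real.sqrt D - (2 * (q + 1) * (a*L) - (q + 2)))
        (by linarith : (0:ℝ) < Real.sqrt D + (2 * (q + 1) * (a*L) - (q + 2))), hsD2]
  obtain ⟨k1, k2, k3⟩ := key
  clear hcase hR
  subst hL
  have hcc : R * C / C = R := by field_simp
  rw [hcc]
  refine ⟨⟨?_, ?_⟩, ?_⟩
  · nlinarith [k2, hRpos, mul_pos hRpos hC]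
  · nlinarith [k1, hRpos, mul_pos hRpos hC]
  · apply div_nonneg (mul_nonneg ha.le (by nlinarith [k3])) (by positivity)
end
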